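/- arXiv:2601.20174 — 5 statements merged into one kernel-verified Lean document; each statement's English description precedes it below -/
import Mathlib

section
/- Let S ∈ ℝ^{n×m} have SVD S = UΣVᵀ with singular values σ₁ > σ₂ > ... > σ_k > σ_{k+1} (strict gaps). If P* ∈ ℝ^{n×k} has orthonormal columns and globally maximizes J(P) = Σ_{ℓ=1}^k ‖P_ℓᵀS‖_F², then P* = U_k D where U_k consists of the first k left singular vectors of S and D is a diagonal matrix with ±1 diagonal entries. -/
open Matrix BigOperators Finset

lemma sum_lt_reindex {b : ℕ} (a : ℕ) (hab : a ≤ b) (h : Fin b → ℝ) :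
    ∑ j ∈ univ.filter (fun j : Fin b => (j:ℕ) < a), h j = ∑ j : Fin a, h (Fin.castLE hab j) := by
  refine (Finset.sum_nbij (i := fun j : Fin a => Fin.castLE hab j) ?_ ?_ ?_ ?_).symm
  · intro x _; simp [Fin.castLE, x.2]
  · intro x _ y _ hxy; exact Fin.castLE_injective _ hxy
  · intro x hx
    simp only [coe_filter, Set.mem_setOf_eq, mem_univ, true_and] at hx
    exact ⟨⟨(x:ℕ), hx⟩, by simp, by ext; simp⟩
  · intro x _; rfl

lemma card_lt_filter {b : ℕ} (a : ℕ) (hab : a ≤ b) :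
    ((univ.filter (fun j : Fin b => (j:ℕ) < a)).card : ℝ) = a := by
  have := sum_lt_reindex a hab (fun _ => (1:ℝ))
  simpa using this

lemma keyA {n : ℕ} (μ : Fin n → ℝ) (hμ : Antitone μ) (r : Fin n → ℝ)
    (hr0 : ∀ i, 0 ≤ r i) (hr1 : ∀ i, r i ≤ 1) (p : ℕ) (hp : p < n) (hp0 : 0 < p)
    (hsum : ∑ i, r i = p) :
    ∑ i, μ i * r i + (μ ⟨p-1, by omega⟩ - μ ⟨p, hp⟩) *
        (∑ i ∈ univ.filter (fun i : Fin n => ¬ (i:ℕ) < p), r i)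
      ≤ ∑ i ∈ univ.filter (fun i : Fin n => (i:ℕ) < p), μ i := by
  set lo := univ.filter (fun i : Fin n => (i:ℕ) < p) with hlo
  set hi := univ.filter (fun i : Fin n => ¬ (i:ℕ) < p) with hhi
  set E := ∑ i ∈ hi, r i with hE
  have hsplit : ∑ i ∈ lo, r i + E = p := by
    rw [hE, hlo, hhi, Finset.sum_filter_add_sum_filter_not]; exact hsum
  have hsplitμ : ∑ i, μ i * r i = ∑ i ∈ lo, μ i * r i + ∑ i ∈ hi, μ i * r i :=
    (Finset.sum_filter_add_sum_filter_not _ _ _).symm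
  have hcard : ((lo.card : ℝ)) = p := card_lt_filter p hp.le
  have h1 : ∑ i ∈ lo, μ i * r i ≤ ∑ i ∈ lo, (μ i + μ ⟨p-1, by omega⟩ * (r i - 1)) := by
    apply Finset.sum_le_sum
    intro i hi'
    have hip : (i:ℕ) < p := (Finset.mem_filter.mp hi').2
    have hle : μ ⟨p-1, by omega⟩ ≤ μ i := hμ (by simp [Fin.le_def]; omega)
    nlinarith [hr1 i]
  have h2 : ∑ i ∈ hi, μ i * r i ≤ ∑ i ∈ hi, μ ⟨p, hp⟩ * r i := by
    apply Finset.sum_le_sum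
    intro i hi'
    have hip : ¬ (i:ℕ) < p := (Finset.mem_filter.mp hi').2
    exact mul_le_mul_of_nonneg_right (hμ (by simp [Fin.le_def]; omega)) (hr0 i)
  have e1 : ∑ i ∈ lo, (μ i + μ ⟨p-1, by omega⟩ * (r i - 1))
      = ∑ i ∈ lo, μ i - μ ⟨p-1, by omega⟩ * E := by
    rw [Finset.sum_add_distrib, ← Finset.mul_sum, Finset.sum_sub_distrib, Finset.sum_const,
      nsmul_eq_mul]
    have : ∑ i ∈ lo, r i = p - E := by linarith
    rw [this, hcard]; ring
  have e2 : ∑ i ∈ hi, μ ⟨p, hp⟩ * r i = μ ⟨p, hp⟩ * E := by rw [← Finset.mul_sum]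
  linarith


/-- Nested NLSS objective: J(P) = Σ_{ℓ=1}^{k} ‖P_ℓᵀ S‖_F². -/
noncomputable def J {n m k : ℕ} (S : Matrix (Fin n) (Fin m) ℝ)
    (P : Matrix (Fin n) (Fin k) ℝ) : ℝ :=
  ∑ ℓ : Fin k, ∑ j : Fin k, if j ≤ ℓ then ∑ c : Fin m, ((Pᵀ * S) j c) ^ 2 else 0

theorem stmt1 {n m k : ℕ} (hk : k < n)
    (S : Matrix (Fin n) (Fin m) ℝ)
    (u : Fin n → (Fin n → ℝ)) (μ : Fin n → ℝ)
    (hu : ∀ i j, u i ⬝ᵥ u j = if i = j then (1 : ℝ) else 0)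
    (heig : ∀ i, (S * Sᵀ) *ᵥ u i = μ i • u i)
    (hμ : Antitone μ)
    -- strict gaps σ₁ > σ₂ > ... > σ_k > σ_{k+1}, i.e. μ strictly decreasing on indices 0..k
    (hgap : ∀ i j : Fin n, (i : ℕ) < (j : ℕ) → (j : ℕ) ≤ k → μ j < μ i)
    (Pstar : Matrix (Fin n) (Fin k) ℝ)
    (hPstar : Pstarᵀ * Pstar = 1)
    (hmax : ∀ P : Matrix (Fin n) (Fin k) ℝ, Pᵀ * P = 1 → J S P ≤ J S Pstar) :
    ∃ D : Fin k → ℝ, (∀ j, D j = 1 ∨ D j = -1) ∧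
      ∀ j : Fin k, Pstarᵀ j = D j • u (Fin.castLE hk.le j) := by
  classical
  set A := S * Sᵀ with hA
  set U : Matrix (Fin n) (Fin n) ℝ := Matrix.of u with hU
  have hUUT : U * Uᵀ = 1 := by
    ext i j
    simpa [Matrix.mul_apply, Matrix.one_apply, dotProduct, hU] using hu i j
  have hUTU : Uᵀ * U = 1 := mul_eq_one_comm.mp hUUT
  have hAU : A * Uᵀ = Uᵀ * Matrix.diagonal μ := by
    ext i j
    have h := congrFun (heig j) i
    simp only [Matrix.mulVec, dotProduct, Pi.smul_apply, smul_eq_mul] at h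
    rw [Matrix.mul_diagonal]
    simp only [Matrix.mul_apply, Matrix.transpose_apply, Matrix.of_apply, hU]
    exact h.trans (mul_comm _ _)
  have hdiagU : U * A * Uᵀ = Matrix.diagonal μ := by
    rw [Matrix.mul_assoc, hAU, ← Matrix.mul_assoc, hUUT, Matrix.one_mul]
  have hUdU : Uᵀ * Matrix.diagonal μ * U = A := by
    rw [← hAU, Matrix.mul_assoc, hUTU, Matrix.mul_one]
  set C := Pstarᵀ * Uᵀ with hC
  have hCU : C * U = Pstarᵀ := by rw [hC, Matrix.mul_assoc, hUTU, Matrix.mul_one]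
  have hCT : Cᵀ = U * Pstar := by
    rw [hC, Matrix.transpose_mul, Matrix.transpose_transpose, Matrix.transpose_transpose]
  have hCC : C * Cᵀ = 1 := by
    rw [hCT, hC, Matrix.mul_assoc, ← Matrix.mul_assoc Uᵀ U _, hUTU, Matrix.one_mul, hPstar]
  have hCdC : C * Matrix.diagonal μ * Cᵀ = Pstarᵀ * A * Pstar := by
    rw [hCT, hC, show Pstarᵀ * Uᵀ * Matrix.diagonal μ * (U * Pstar)
        = Pstarᵀ * (Uᵀ * Matrix.diagonal μ * U) * Pstar by
      simp only [Matrix.mul_assoc], hUdU, Matrix.mul_assoc]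
  -- J in terms of PᵀAP
  have hJ : ∀ P : Matrix (Fin n) (Fin k) ℝ,
      _root_.J S P = ∑ ℓ : Fin k, ∑ j : Fin k, if j ≤ ℓ then (Pᵀ * A * P) j j else 0 := by
    intro P
    unfold _root_.J
    refine Finset.sum_congr rfl fun ℓ _ => Finset.sum_congr rfl fun j _ => ?_
    congr 1
    have hPA : Pᵀ * A * P = (Pᵀ * S) * (Pᵀ * S)ᵀ := by
      rw [Matrix.transpose_mul, Matrix.transpose_transpose, hA]
      simp only [Matrix.mul_assoc]
    rw [hPA, Matrix.mul_apply]
    refine Finset.sum_congr rfl fun c _ => ?_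
    rw [Matrix.transpose_apply, sq]
  -- the value for Pstar
  have hval : ∀ i : Fin n, ∀ j : Fin k, ((i:ℕ) = (j:ℕ)) = (i = Fin.castLE hk.le j) := by
    intro i j
    simp [Fin.ext_iff]
  set E0 : Matrix (Fin k) (Fin n) ℝ :=
    Matrix.of (fun j i => if (i:ℕ) = (j:ℕ) then 1 else 0) with hE0def
  have hE0 : E0 * E0ᵀ = 1 := by
    ext j j'
    simp only [Matrix.mul_apply, Matrix.transpose_apply, Matrix.of_apply, hE0def]
    simp only [hval]
    rw [Finset.sum_eq_single (Fin.castLE hk.le j)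
      (by intro b _ hb; simp [hb]) (by simp)]
    simp [Matrix.one_apply, Fin.ext_iff, eq_comm]
  set P0 : Matrix (Fin n) (Fin k) ℝ := (E0 * U)ᵀ with hP0def
  have hP0T : P0ᵀ = E0 * U := by rw [hP0def, Matrix.transpose_transpose]
  have hP0orth : P0ᵀ * P0 = 1 := by
    rw [hP0T, hP0def, Matrix.transpose_mul, Matrix.mul_assoc,
      ← Matrix.mul_assoc U Uᵀ _, hUUT, Matrix.one_mul, hE0]
  have hP0A : P0ᵀ * A * P0 = E0 * Matrix.diagonal μ * E0ᵀ := by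
    rw [hP0T, hP0def, Matrix.transpose_mul,
      show E0 * U * A * (Uᵀ * E0ᵀ) = E0 * (U * A * Uᵀ) * E0ᵀ by simp only [Matrix.mul_assoc],
      hdiagU]
  have hP0diag : ∀ j : Fin k, (P0ᵀ * A * P0) j j = μ (Fin.castLE hk.le j) := by
    intro j
    rw [hP0A, Matrix.mul_apply]
    simp only [Matrix.mul_diagonal, Matrix.transpose_apply, Matrix.of_apply, hE0def, hval]
    rw [Finset.sum_eq_single (Fin.castLE hk.le j) (by intro b _ hb; simp [hb]) (by simp)]
    simp
  -- M matrix of squared coefficients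
  set M : Fin k → Fin n → ℝ := fun j i => (C j i)^2 with hM
  have hMnn : ∀ j i, 0 ≤ M j i := fun j i => sq_nonneg _
  have hrow : ∀ j, ∑ i, M j i = 1 := by
    intro j
    have h := congrFun (congrFun hCC j) j
    simp only [Matrix.mul_apply, Matrix.transpose_apply, Matrix.one_apply_eq] at h
    rw [← h]
    exact Finset.sum_congr rfl fun i _ => (sq (C j i)).symm ▸ rfl
  have hcol : ∀ i, ∑ j, M j i ≤ 1 := by
    intro i
    set Q := Cᵀ * C with hQ
    have hQQ : Q * Q = Q := by
      rw [hQ, Matrix.mul_assoc, ← Matrix.mul_assoc C Cᵀ C, hCC, Matrix.one_mul]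
    have hQs : ∀ a b, Q a b = Q b a := by
      intro a b
      simp only [hQ, Matrix.mul_apply, Matrix.transpose_apply]
      exact Finset.sum_congr rfl fun t _ => mul_comm _ _
    have hdiag : ∑ j, M j i = Q i i := by
      simp only [hQ, Matrix.mul_apply, Matrix.transpose_apply, hM, sq]
    have hQii : Q i i = ∑ t, (Q i t)^2 := by
      have := congrFun (congrFun hQQ i) i
      rw [Matrix.mul_apply] at this
      rw [← this]
      exact Finset.sum_congr rfl fun t _ => by rw [sq, hQs t i]
    have h1 : (Q i i)^2 ≤ Q i i := by
      conv_rhs => rw [hQii]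
      exact Finset.single_le_sum (f := fun t => (Q i t)^2) (fun t _ => sq_nonneg _) (Finset.mem_univ i)
    nlinarith [hdiag, h1, Finset.sum_nonneg (fun j (_ : j ∈ Finset.univ) => hMnn j i)]
  -- partial column functions
  set r : Fin k → Fin n → ℝ :=
    fun ℓ i => ∑ j ∈ univ.filter (fun j : Fin k => j ≤ ℓ), M j i with hr
  have hr0 : ∀ ℓ i, 0 ≤ r ℓ i :=
    fun ℓ i => Finset.sum_nonneg fun j _ => hMnn j i
  have hr1 : ∀ ℓ i, r ℓ i ≤ 1 := by
    intro ℓ i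
    refine le_trans (Finset.sum_le_sum_of_subset_of_nonneg (Finset.filter_subset _ _)
      (fun j _ _ => hMnn j i)) (hcol i)
  have hrsum : ∀ ℓ : Fin k, ∑ i, r ℓ i = ((ℓ:ℕ) + 1 : ℕ) := by
    intro ℓ
    rw [hr]
    rw [Finset.sum_comm]
    have : ∀ j ∈ univ.filter (fun j : Fin k => j ≤ ℓ), ∑ i, M j i = 1 := fun j _ => hrow j
    rw [Finset.sum_congr rfl this, Finset.sum_const, nsmul_eq_mul, mul_one]
    have hfe : univ.filter (fun j : Fin k => j ≤ ℓ)
        = univ.filter (fun j : Fin k => (j:ℕ) < (ℓ:ℕ)+1) := by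
      apply Finset.filter_congr; intro j _; rw [Fin.le_def]; constructor <;> omega
    rw [hfe]
    have := card_lt_filter (b := k) ((ℓ:ℕ)+1) (by omega)
    rw [this]
  have hℓn : ∀ ℓ : Fin k, (ℓ:ℕ)+1 < n := fun ℓ => by have := ℓ.2; omega
  set T : Fin k → ℝ :=
    fun ℓ => ∑ j ∈ univ.filter (fun j : Fin k => j ≤ ℓ), μ (Fin.castLE hk.le j) with hT
  set gap : Fin k → ℝ :=
    fun ℓ => μ ⟨(ℓ:ℕ)+1-1, by have := hℓn ℓ; omega⟩ - μ ⟨(ℓ:ℕ)+1, hℓn ℓ⟩ with hgapdef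
  set Esl : Fin k → ℝ :=
    fun ℓ => ∑ i ∈ univ.filter (fun i : Fin n => ¬ (i:ℕ) < (ℓ:ℕ)+1), r ℓ i with hEsl
  have hfe : ∀ ℓ : Fin k, univ.filter (fun j : Fin k => j ≤ ℓ)
      = univ.filter (fun j : Fin k => (j:ℕ) < (ℓ:ℕ)+1) := by
    intro ℓ
    apply Finset.filter_congr; intro j _; rw [Fin.le_def]; constructor <;> omega
  have hTeq : ∀ ℓ : Fin k,
      T ℓ = ∑ i ∈ univ.filter (fun i : Fin n => (i:ℕ) < (ℓ:ℕ)+1), μ i := by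
    intro ℓ
    show (∑ j ∈ univ.filter (fun j : Fin k => j ≤ ℓ), μ (Fin.castLE hk.le j)) = _
    rw [hfe ℓ, sum_lt_reindex ((ℓ:ℕ)+1) (by have := ℓ.2; omega)
      (fun j => μ (Fin.castLE hk.le j)), sum_lt_reindex ((ℓ:ℕ)+1) (hℓn ℓ).le μ]
    rfl
  have hPdiag : ∀ j : Fin k, (Pstarᵀ * A * Pstar) j j = ∑ i, μ i * M j i := by
    intro j
    rw [← hCdC, Matrix.mul_apply]
    refine Finset.sum_congr rfl fun i _ => ?_
    rw [Matrix.mul_diagonal, Matrix.transpose_apply, hM]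
    ring
  have hJstar : _root_.J S Pstar = ∑ ℓ : Fin k, ∑ i, μ i * r ℓ i := by
    rw [hJ Pstar]
    refine Finset.sum_congr rfl fun ℓ _ => ?_
    rw [← Finset.sum_filter, Finset.sum_congr rfl (fun j _ => hPdiag j), Finset.sum_comm]
    exact Finset.sum_congr rfl fun i _ => (Finset.mul_sum _ _ _).symm
  have hJ0 : _root_.J S P0 = ∑ ℓ : Fin k, T ℓ := by
    rw [hJ P0]
    refine Finset.sum_congr rfl fun ℓ _ => ?_
    rw [← Finset.sum_filter]
    exact Finset.sum_congr rfl fun j _ => hP0diag j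
  have hmax0 : ∑ ℓ : Fin k, T ℓ ≤ ∑ ℓ : Fin k, ∑ i, μ i * r ℓ i := by
    rw [← hJ0, ← hJstar]; exact hmax P0 hP0orth
  have hkey : ∀ ℓ : Fin k, ∑ i, μ i * r ℓ i + gap ℓ * Esl ℓ ≤ T ℓ := by
    intro ℓ
    have h := keyA μ hμ (r ℓ) (hr0 ℓ) (hr1 ℓ) ((ℓ:ℕ)+1) (hℓn ℓ) (Nat.succ_pos _)
      (by exact_mod_cast hrsum ℓ)
    rw [hTeq ℓ]
    exact h
  have hgappos : ∀ ℓ : Fin k, 0 < gap ℓ := by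
    intro ℓ
    have := hgap ⟨(ℓ:ℕ)+1-1, by have := hℓn ℓ; omega⟩ ⟨(ℓ:ℕ)+1, hℓn ℓ⟩
      (by show (ℓ:ℕ)+1-1 < (ℓ:ℕ)+1; omega) (by show (ℓ:ℕ)+1 ≤ k; exact ℓ.2)
    rw [hgapdef]; dsimp only; linarith
  have hEnn : ∀ ℓ : Fin k, 0 ≤ Esl ℓ :=
    fun ℓ => Finset.sum_nonneg fun i _ => hr0 ℓ i
  have hslack0 : ∀ ℓ : Fin k, Esl ℓ = 0 := by
    have hsum_le : ∑ ℓ : Fin k, gap ℓ * Esl ℓ ≤ 0 := by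
      have h := Finset.sum_le_sum (fun ℓ (_ : ℓ ∈ Finset.univ) => hkey ℓ)
      rw [Finset.sum_add_distrib] at h
      linarith [hmax0]
    have hnn : ∀ ℓ ∈ Finset.univ, (0:ℝ) ≤ gap ℓ * Esl ℓ :=
      fun ℓ _ => mul_nonneg (hgappos ℓ).le (hEnn ℓ)
    have hz : ∑ ℓ : Fin k, gap ℓ * Esl ℓ = 0 :=
      le_antisymm hsum_le (Finset.sum_nonneg hnn)
    intro ℓ
    have := (Finset.sum_eq_zero_iff_of_nonneg hnn).mp hz ℓ (Finset.mem_univ ℓ)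
    rcases mul_eq_zero.mp this with h | h
    · exact absurd h (ne_of_gt (hgappos ℓ))
    · exact h
  have htri : ∀ (j : Fin k) (i : Fin n), (j:ℕ) < (i:ℕ) → M j i = 0 := by
    intro j i hij
    have hrj : r j i = 0 := by
      refine (Finset.sum_eq_zero_iff_of_nonneg (fun i' _ => hr0 j i')).mp (hslack0 j) i ?_
      simp only [Finset.mem_filter, Finset.mem_univ, true_and]
      omega
    refine (Finset.sum_eq_zero_iff_of_nonneg (fun j' _ => hMnn j' i)).mp hrj j ?_
    simp
  -- identify M with the identity pattern by strong induction
  have hMid : ∀ t : ℕ, ∀ j : Fin k, (j:ℕ) = t → ∀ i : Fin n,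
      M j i = if (i:ℕ) = (j:ℕ) then 1 else 0 := by
    intro t
    induction t using Nat.strong_induction_on with
    | _ t IH =>
      intro j hjt i
      have low : ∀ i' : Fin n, (i':ℕ) < (j:ℕ) → M j i' = 0 := by
        intro i' hij
        have hj'k : (i':ℕ) < k := lt_trans hij j.2
        set j' : Fin k := ⟨(i':ℕ), hj'k⟩ with hj'
        have h1 : M j' i' = 1 := by
          rw [IH (i':ℕ) (by omega) j' rfl i']
          simp [hj']
        have hc := hcol i'
        have hsplit : M j' i' + ∑ j'' ∈ Finset.univ.erase j', M j'' i'
            = ∑ j'' : Fin k, M j'' i' :=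
          Finset.add_sum_erase Finset.univ (fun j'' => M j'' i') (Finset.mem_univ j')
        have herase : ∑ j'' ∈ Finset.univ.erase j', M j'' i' = 0 := by
          have hle : ∑ j'' ∈ Finset.univ.erase j', M j'' i' ≤ 0 := by
            rw [h1] at hsplit; linarith
          exact le_antisymm hle (Finset.sum_nonneg fun x _ => hMnn x i')
        refine (Finset.sum_eq_zero_iff_of_nonneg (fun x _ => hMnn x i')).mp herase j ?_
        refine Finset.mem_erase.mpr ⟨?_, Finset.mem_univ _⟩
        intro h
        rw [h] at hij
        simp [hj'] at hij
      by_cases hcase : (i:ℕ) = (j:ℕ)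
      · rw [if_pos hcase]
        have hother : ∀ i' : Fin n, i' ∈ Finset.univ → i' ≠ i → M j i' = 0 := by
          intro i' _ hne
          have : (i':ℕ) ≠ (i:ℕ) := fun h => hne (Fin.ext h)
          rcases lt_or_gt_of_ne this with h | h
          · exact low i' (by omega)
          · exact htri j i' (by omega)
        exact (Finset.sum_eq_single i hother
          (fun h => absurd (Finset.mem_univ i) h)).symm.trans (hrow j)
      · rw [if_neg hcase]
        rcases lt_or_gt_of_ne hcase with h | h
        · exact low i h
        · exact htri j i h
  have hMfinal : ∀ (j : Fin k) (i : Fin n), M j i = if (i:ℕ) = (j:ℕ) then 1 else 0 :=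
    fun j i => hMid (j:ℕ) j rfl i
  -- construct D
  refine ⟨fun j => C j (Fin.castLE hk.le j), ?_, ?_⟩
  · intro j
    have h1 : M j (Fin.castLE hk.le j) = 1 := by rw [hMfinal]; simp
    rw [hM] at h1
    have h1' : C j (Fin.castLE hk.le j) * C j (Fin.castLE hk.le j) = 1 := by
      rw [← sq]; exact h1
    exact mul_self_eq_one_iff.mp h1' 
  · intro j
    have hCz : ∀ i : Fin n, i ≠ Fin.castLE hk.le j → C j i = 0 := by
      intro i hne
      have h0 : M j i = 0 := by
        rw [hMfinal, if_neg]
        intro h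
        exact hne (Fin.ext (by simpa using h))
      rw [hM] at h0
      exact pow_eq_zero_iff (by norm_num) |>.mp h0
    have hrowj := congrFun hCU j
    funext x
    have : Pstarᵀ j x = (C * U) j x := (congrFun hrowj x).symm
    rw [this, Matrix.mul_apply]
    rw [Finset.sum_eq_single (Fin.castLE hk.le j)
      (fun i _ hne => by rw [hCz i hne, zero_mul])
      (fun h => absurd (Finset.mem_univ _) h)]
    simp [hU]
end

section
/- Let A, B ∈ ℂ^{n×n} with singular values α₁ ≥ ... ≥ α_n and β₁ ≥ ... ≥ β_n respectively. Then |Tr(AB)| ≤ Σ_{i=1}^n α_i β_i (von Neumann trace inequality). -/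
open Matrix BigOperators Finset

private lemma vn_tele (α : ℕ → ℝ) (i m : ℕ) (h : i ≤ m) :
    ∑ k ∈ Finset.Ico i m, (α k - α (k+1)) = α i - α m := by
  induction m with
  | zero => interval_cases i; simp
  | succ m ih =>
    rcases Nat.lt_or_ge i (m+1) with h'|h'
    · rw [Finset.sum_Ico_succ_top (by omega), ih (by omega)]; ring
    · have : i = m + 1 := by omega
      subst this; simp

private lemma vn_count (n m : ℕ) :
    ∑ i ∈ range n, (if i ≤ m then (1:ℝ) else 0) = (min n (m+1) : ℕ) := by
  rw [Finset.sum_boole]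
  congr 1
  have : (range n).filter (fun i => i ≤ m) = range (min n (m+1)) := by
    ext i; simp
  rw [this, card_range]

private lemma vn_key (n : ℕ) (α β : ℕ → ℝ) (C : ℕ → ℕ → ℝ)
    (hα : ∀ k, α (k+1) ≤ α k) (hβ : ∀ k, β (k+1) ≤ β k)
    (hαn : ∀ k, n ≤ k → α k = 0) (hβn : ∀ k, n ≤ k → β k = 0)
    (hC0 : ∀ i j, 0 ≤ C i j)
    (hrow : ∀ i, ∑ j ∈ range n, C i j ≤ 1)
    (hcol : ∀ j, ∑ i ∈ range n, C i j ≤ 1) :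
    ∑ i ∈ range n, ∑ j ∈ range n, α i * β j * C i j ≤ ∑ i ∈ range n, α i * β i := by
  set a : ℕ → ℝ := fun k => α k - α (k+1) with ha
  set b : ℕ → ℝ := fun k => β k - β (k+1) with hb
  have ha0 : ∀ k, 0 ≤ a k := fun k => sub_nonneg.mpr (hα k)
  have hb0 : ∀ k, 0 ≤ b k := fun k => sub_nonneg.mpr (hβ k)
  have hexp : ∀ (γ : ℕ → ℝ), (∀ k, n ≤ k → γ k = 0) → ∀ i ∈ range n,
      γ i = ∑ k ∈ range n, (if i ≤ k then (γ k - γ (k+1)) else 0) := by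
    intro γ hγn i hi
    have hfil : (range n).filter (fun k => i ≤ k) = Finset.Ico i n := by
      ext k; simp [Finset.mem_Ico]; omega
    rw [← Finset.sum_filter, hfil, vn_tele γ i n (by simpa using Nat.le_of_lt (mem_range.mp hi)),
      hγn n le_rfl, sub_zero]
  have hαsum := hexp α hαn
  have hβsum := hexp β hβn
  set S : ℕ → ℕ → ℝ := fun k l => ∑ i ∈ range n, ∑ j ∈ range n,
    (if i ≤ k ∧ j ≤ l then C i j else 0) with hS
  set N : ℕ → ℕ → ℝ := fun k l => ∑ i ∈ range n, (if i ≤ k ∧ i ≤ l then (1:ℝ) else 0) with hN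
  have hLHS : ∑ i ∈ range n, ∑ j ∈ range n, α i * β j * C i j
      = ∑ k ∈ range n, ∑ l ∈ range n, a k * b l * S k l := by
    have step1 : ∑ i ∈ range n, ∑ j ∈ range n, α i * β j * C i j
        = ∑ i ∈ range n, ∑ j ∈ range n, ∑ k ∈ range n, ∑ l ∈ range n,
            ((if i ≤ k then a k else 0) * (if j ≤ l then b l else 0) * C i j) := by
      refine Finset.sum_congr rfl fun i hi => Finset.sum_congr rfl fun j hj => ?_
      rw [hαsum i hi, hβsum j hj]
      rw [Finset.sum_mul_sum, Finset.sum_mul]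
      refine Finset.sum_congr rfl fun k _ => ?_
      rw [Finset.sum_mul]
    rw [step1]
    have step2 : ∑ i ∈ range n, ∑ j ∈ range n, ∑ k ∈ range n, ∑ l ∈ range n,
            ((if i ≤ k then a k else 0) * (if j ≤ l then b l else 0) * C i j)
        = ∑ k ∈ range n, ∑ l ∈ range n, ∑ i ∈ range n, ∑ j ∈ range n,
            ((if i ≤ k then a k else 0) * (if j ≤ l then b l else 0) * C i j) := by
      rw [show ∀ (f : ℕ → ℕ → ℕ → ℕ → ℝ),
        (∑ i ∈ range n, ∑ j ∈ range n, ∑ k ∈ range n, ∑ l ∈ range n, f i j k l)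
        = ∑ k ∈ range n, ∑ l ∈ range n, ∑ i ∈ range n, ∑ j ∈ range n, f i j k l from ?_]
      intro f
      calc (∑ i ∈ range n, ∑ j ∈ range n, ∑ k ∈ range n, ∑ l ∈ range n, f i j k l)
          = ∑ i ∈ range n, ∑ k ∈ range n, ∑ j ∈ range n, ∑ l ∈ range n, f i j k l :=
            Finset.sum_congr rfl fun i _ => Finset.sum_comm
        _ = ∑ k ∈ range n, ∑ i ∈ range n, ∑ j ∈ range n, ∑ l ∈ range n, f i j k l :=
            Finset.sum_comm
        _ = ∑ k ∈ range n, ∑ i ∈ range n, ∑ l ∈ range n, ∑ j ∈ range n, f i j k l :=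
            Finset.sum_congr rfl fun k _ => Finset.sum_congr rfl fun i _ => Finset.sum_comm
        _ = ∑ k ∈ range n, ∑ l ∈ range n, ∑ i ∈ range n, ∑ j ∈ range n, f i j k l :=
            Finset.sum_congr rfl fun k _ => Finset.sum_comm
    rw [step2]
    refine Finset.sum_congr rfl fun k _ => Finset.sum_congr rfl fun l _ => ?_
    rw [hS, Finset.mul_sum]
    refine Finset.sum_congr rfl fun i _ => ?_
    rw [Finset.mul_sum]
    refine Finset.sum_congr rfl fun j _ => ?_
    by_cases h1 : i ≤ k <;> by_cases h2 : j ≤ l <;> simp [h1, h2]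
  have hRHS : ∑ i ∈ range n, α i * β i
      = ∑ k ∈ range n, ∑ l ∈ range n, a k * b l * N k l := by
    have step1 : ∑ i ∈ range n, α i * β i
        = ∑ i ∈ range n, ∑ k ∈ range n, ∑ l ∈ range n,
            ((if i ≤ k then a k else 0) * (if i ≤ l then b l else 0)) := by
      refine Finset.sum_congr rfl fun i hi => ?_
      rw [hαsum i hi, hβsum i hi, Finset.sum_mul_sum]
    rw [step1]
    have step2 : ∑ i ∈ range n, ∑ k ∈ range n, ∑ l ∈ range n,
            ((if i ≤ k then a k else 0) * (if i ≤ l then b l else 0))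
        = ∑ k ∈ range n, ∑ l ∈ range n, ∑ i ∈ range n,
            ((if i ≤ k then a k else 0) * (if i ≤ l then b l else 0)) := by
      rw [Finset.sum_comm]
      exact Finset.sum_congr rfl fun k _ => Finset.sum_comm
    rw [step2]
    refine Finset.sum_congr rfl fun k _ => Finset.sum_congr rfl fun l _ => ?_
    rw [hN, Finset.mul_sum]
    refine Finset.sum_congr rfl fun i _ => ?_
    by_cases h1 : i ≤ k <;> by_cases h2 : i ≤ l <;> simp [h1, h2]
  have hSN : ∀ k l, S k l ≤ N k l := by
    intro k l
    have hb1 : S k l ≤ (min n (k+1) : ℕ) := by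
      rw [hS, ← vn_count n k]
      refine Finset.sum_le_sum fun i _ => ?_
      by_cases h1 : i ≤ k
      · simp only [h1, if_true, true_and]
        calc ∑ j ∈ range n, (if j ≤ l then C i j else 0)
            ≤ ∑ j ∈ range n, C i j :=
              Finset.sum_le_sum fun j _ => by by_cases h : j ≤ l <;> simp [h, hC0]
          _ ≤ 1 := hrow i
      · simp [h1]
    have hb2 : S k l ≤ (min n (l+1) : ℕ) := by
      rw [hS]
      show (∑ i ∈ range n, ∑ j ∈ range n, if i ≤ k ∧ j ≤ l then C i j else 0) ≤ _
      rw [Finset.sum_comm, ← vn_count n l]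
      refine Finset.sum_le_sum fun j _ => ?_
      by_cases h2 : j ≤ l
      · simp only [h2, if_true, and_true]
        calc ∑ i ∈ range n, (if i ≤ k then C i j else 0)
            ≤ ∑ i ∈ range n, C i j :=
              Finset.sum_le_sum fun i _ => by by_cases h : i ≤ k <;> simp [h, hC0]
          _ ≤ 1 := hcol j
      · simp [h2]
    have hNval : N k l = (min (min n (k+1)) (min n (l+1)) : ℕ) := by
      rw [hN]
      have : ∀ i, (i ≤ k ∧ i ≤ l) = (i ≤ min k l) := by intro i; simp [le_min_iff]
      simp only [this]
      rw [vn_count n (min k l)]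
      congr 1
      omega
    rw [hNval]
    have : ((min (min n (k+1)) (min n (l+1)) : ℕ) : ℝ)
        = min ((min n (k+1) : ℕ) : ℝ) ((min n (l+1) : ℕ) : ℝ) := by
      push_cast [Nat.cast_min]; norm_num
    rw [this]
    exact le_min hb1 hb2
  rw [hLHS, hRHS]
  refine Finset.sum_le_sum fun k _ => Finset.sum_le_sum fun l _ => ?_
  exact mul_le_mul_of_nonneg_left (hSN k l) (mul_nonneg (ha0 k) (hb0 l))

/-- von Neumann trace inequality: |Tr(AB)| ≤ Σ αᵢβᵢ for singular values in
decreasing order, given via SVDs of A and B. -/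
theorem stmt4 {n : ℕ} (A B : Matrix (Fin n) (Fin n) ℂ)
    (α β : Fin n → ℝ)
    (hα : Antitone α) (hβ : Antitone β)
    (hα0 : ∀ i, 0 ≤ α i) (hβ0 : ∀ i, 0 ≤ β i)
    (UA VA UB VB : Matrix (Fin n) (Fin n) ℂ)
    (hUA : UAᴴ * UA = 1) (hVA : VAᴴ * VA = 1)
    (hUB : UBᴴ * UB = 1) (hVB : VBᴴ * VB = 1)
    (hA : A = UA * Matrix.diagonal (fun i => (α i : ℂ)) * VAᴴ)
    (hB : B = UB * Matrix.diagonal (fun i => (β i : ℂ)) * VBᴴ) :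
    ‖(A * B).trace‖ ≤ ∑ i : Fin n, α i * β i := by
  set X := VAᴴ * UB with hXdef
  set Y := VBᴴ * UA with hYdef
  -- unitarity of X and Y
  have hVA' : VA * VAᴴ = 1 := mul_eq_one_comm.mp hVA
  have hVB' : VB * VBᴴ = 1 := mul_eq_one_comm.mp hVB
  have hX : Xᴴ * X = 1 := by
    have h1 : Xᴴ * X = UBᴴ * (VA * VAᴴ) * UB := by
      rw [hXdef, conjTranspose_mul, conjTranspose_conjTranspose]
      simp only [Matrix.mul_assoc]
    rw [h1, hVA', Matrix.mul_one, hUB]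
  have hY : Yᴴ * Y = 1 := by
    have h1 : Yᴴ * Y = UAᴴ * (VB * VBᴴ) * UA := by
      rw [hYdef, conjTranspose_mul, conjTranspose_conjTranspose]
      simp only [Matrix.mul_assoc]
    rw [h1, hVB', Matrix.mul_one, hUA]
  have hXX : X * Xᴴ = 1 := mul_eq_one_comm.mp hX
  have hYY : Y * Yᴴ = 1 := mul_eq_one_comm.mp hY
  -- norm-square sums
  have rowsum : ∀ (M : Matrix (Fin n) (Fin n) ℂ), M * Mᴴ = 1 →
      ∀ i, ∑ j : Fin n, Complex.normSq (M i j) = 1 := by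
    intro M hM i
    have h := congrFun (congrFun hM i) i
    rw [Matrix.mul_apply, Matrix.one_apply_eq] at h
    simp only [Matrix.conjTranspose_apply, Complex.star_def, Complex.mul_conj] at h
    exact_mod_cast h
  have colsum : ∀ (M : Matrix (Fin n) (Fin n) ℂ), Mᴴ * M = 1 →
      ∀ j, ∑ i : Fin n, Complex.normSq (M i j) = 1 := by
    intro M hM j
    have h := congrFun (congrFun hM j) j
    rw [Matrix.mul_apply, Matrix.one_apply_eq] at h
    simp only [Matrix.conjTranspose_apply, Complex.star_def, Complex.conj_mul'] at h
    simp only [← Complex.sq_norm]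
    exact_mod_cast h
  -- doubly (sub)stochastic matrix
  set C : Fin n → Fin n → ℝ :=
    fun i j => (Complex.normSq (X i j) + Complex.normSq (Y j i)) / 2 with hCdef
  have hC0 : ∀ i j, 0 ≤ C i j := fun i j => by
    have := Complex.normSq_nonneg (X i j)
    have := Complex.normSq_nonneg (Y j i)
    simp only [hCdef]; positivity
  have hCrow : ∀ i : Fin n, ∑ j : Fin n, C i j = 1 := by
    intro i
    simp only [hCdef]
    rw [← Finset.sum_div, Finset.sum_add_distrib, rowsum X hXX i, colsum Y hY i]
    norm_num
  have hCcol : ∀ j : Fin n, ∑ i : Fin n, C i j = 1 := by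
    intro j
    simp only [hCdef]
    rw [← Finset.sum_div, Finset.sum_add_distrib, colsum X hX j, rowsum Y hYY j]
    norm_num
  -- trace formula
  have htr : (A * B).trace = ∑ i : Fin n, ∑ j : Fin n,
      (α i : ℂ) * X i j * (β j : ℂ) * Y j i := by
    rw [hA, hB]
    have hfact : (UA * Matrix.diagonal (fun i => (α i : ℂ)) * VAᴴ) *
        (UB * Matrix.diagonal (fun i => (β i : ℂ)) * VBᴴ)
        = UA * (Matrix.diagonal (fun i => (α i : ℂ)) * X *
            Matrix.diagonal (fun i => (β i : ℂ))) * VBᴴ := by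
      simp only [hXdef, Matrix.mul_assoc]
    rw [hfact, Matrix.trace_mul_comm, ← Matrix.mul_assoc, Matrix.trace_mul_comm, Matrix.trace]
    have hentry : ∀ i j : Fin n,
        (Matrix.diagonal (fun i => (α i : ℂ)) * X * Matrix.diagonal (fun i => (β i : ℂ))) i j
        = (α i : ℂ) * X i j * (β j : ℂ) := by
      intro i j; rw [Matrix.mul_diagonal, Matrix.diagonal_mul]
    refine Finset.sum_congr rfl fun i _ => ?_
    rw [Matrix.diag_apply, Matrix.mul_apply]
    exact Finset.sum_congr rfl fun j _ => by rw [hentry]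
  -- bound trace by a real double sum
  have habs : ‖(A * B).trace‖
      ≤ ∑ i : Fin n, ∑ j : Fin n, α i * β j * C i j := by
    rw [htr]
    calc ‖∑ i : Fin n, ∑ j : Fin n, (α i : ℂ) * X i j * (β j : ℂ) * Y j i‖
        ≤ ∑ i : Fin n, ‖∑ j : Fin n, (α i : ℂ) * X i j * (β j : ℂ) * Y j i‖ :=
          norm_sum_le _ _
      _ ≤ ∑ i : Fin n, ∑ j : Fin n, ‖(α i : ℂ) * X i j * (β j : ℂ) * Y j i‖ :=
          Finset.sum_le_sum fun i _ => norm_sum_le _ _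
      _ = ∑ i : Fin n, ∑ j : Fin n,
            α i * β j * (‖X i j‖ * ‖Y j i‖) := by
          refine Finset.sum_congr rfl fun i _ => Finset.sum_congr rfl fun j _ => ?_
          rw [norm_mul, norm_mul, norm_mul, Complex.norm_of_nonneg (hα0 i),
            Complex.norm_of_nonneg (hβ0 j)]
          ring
      _ ≤ ∑ i : Fin n, ∑ j : Fin n, α i * β j * C i j := by
          refine Finset.sum_le_sum fun i _ => Finset.sum_le_sum fun j _ => ?_
          refine mul_le_mul_of_nonneg_left ?_ (mul_nonneg (hα0 i) (hβ0 j))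
          have h1 := Complex.sq_norm (X i j)
          have h2 := Complex.sq_norm (Y j i)
          simp only [hCdef]
          nlinarith [sq_nonneg (‖X i j‖ - ‖Y j i‖)]
  -- transfer to ℕ-indexed sums and apply the key lemma
  set α' : ℕ → ℝ := fun k => if h : k < n then α ⟨k, h⟩ else 0 with hα'
  set β' : ℕ → ℝ := fun k => if h : k < n then β ⟨k, h⟩ else 0 with hβ'
  set C' : ℕ → ℕ → ℝ :=
    fun i j => if h : i < n then (if h' : j < n then C ⟨i, h⟩ ⟨j, h'⟩ else 0) else 0 with hC'
  have hconv : ∀ (g : Fin n → ℝ), ∑ i : Fin n, g i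
      = ∑ i ∈ range n, (if h : i < n then g ⟨i, h⟩ else 0) := by
    intro g
    rw [← Fin.sum_univ_eq_sum_range (fun i => if h : i < n then g ⟨i, h⟩ else 0) n]
    exact Finset.sum_congr rfl fun i _ => by simp
  have hdouble : ∑ i : Fin n, ∑ j : Fin n, α i * β j * C i j
      = ∑ i ∈ range n, ∑ j ∈ range n, α' i * β' j * C' i j := by
    rw [hconv]
    refine Finset.sum_congr rfl fun i hi => ?_
    have hi' : i < n := mem_range.mp hi
    rw [dif_pos hi', hconv]
    refine Finset.sum_congr rfl fun j hj => ?_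
    have hj' : j < n := mem_range.mp hj
    rw [dif_pos hj']
    simp [hα', hβ', hC', hi', hj']
  have hsingle : ∑ i : Fin n, α i * β i = ∑ i ∈ range n, α' i * β' i := by
    rw [hconv]
    refine Finset.sum_congr rfl fun i hi => ?_
    have hi' : i < n := mem_range.mp hi
    rw [dif_pos hi']
    simp [hα', hβ', hi']
  have hα'step : ∀ k, α' (k+1) ≤ α' k := by
    intro k
    by_cases h1 : k + 1 < n
    · have h2 : k < n := by omega
      simp only [hα', dif_pos h1, dif_pos h2]
      exact hα (by simp [Fin.le_def])
    · by_cases h2 : k < n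
      · simp only [hα', dif_neg h1, dif_pos h2]; exact hα0 _
      · simp [hα', dif_neg h1, dif_neg h2]
  have hβ'step : ∀ k, β' (k+1) ≤ β' k := by
    intro k
    by_cases h1 : k + 1 < n
    · have h2 : k < n := by omega
      simp only [hβ', dif_pos h1, dif_pos h2]
      exact hβ (by simp [Fin.le_def])
    · by_cases h2 : k < n
      · simp only [hβ', dif_neg h1, dif_pos h2]; exact hβ0 _
      · simp [hβ', dif_neg h1, dif_neg h2]
  have hα'n : ∀ k, n ≤ k → α' k = 0 := fun k hk => by simp [hα', Nat.not_lt.mpr hk]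
  have hβ'n : ∀ k, n ≤ k → β' k = 0 := fun k hk => by simp [hβ', Nat.not_lt.mpr hk]
  have hC'0 : ∀ i j, 0 ≤ C' i j := by
    intro i j
    by_cases h1 : i < n
    · by_cases h2 : j < n
      · simp only [hC', dif_pos h1, dif_pos h2]; exact hC0 _ _
      · simp [hC', dif_pos h1, dif_neg h2]
    · simp [hC', dif_neg h1]
  have hC'row : ∀ i, ∑ j ∈ range n, C' i j ≤ 1 := by
    intro i
    by_cases h1 : i < n
    · have : ∑ j ∈ range n, C' i j = ∑ j : Fin n, C ⟨i, h1⟩ j := by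
        rw [hconv (fun j => C ⟨i, h1⟩ j)]
        exact Finset.sum_congr rfl fun j hj => by
          simp [hC', h1, mem_range.mp hj]
      rw [this, hCrow]
    · have : ∑ j ∈ range n, C' i j = 0 := by
        refine Finset.sum_eq_zero fun j _ => by simp [hC', dif_neg h1]
      rw [this]; norm_num
  have hC'col : ∀ j, ∑ i ∈ range n, C' i j ≤ 1 := by
    intro j
    by_cases h1 : j < n
    · have : ∑ i ∈ range n, C' i j = ∑ i : Fin n, C i ⟨j, h1⟩ := by
        rw [hconv (fun i => C i ⟨j, h1⟩)]
        exact Finset.sum_congr rfl fun i hi => by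
          simp [hC', h1, mem_range.mp hi]
      rw [this, hCcol]
    · have : ∑ i ∈ range n, C' i j = 0 := by
        refine Finset.sum_eq_zero fun i _ => by
          by_cases h2 : i < n <;> simp [hC', h1, h2]
      rw [this]; norm_num
  calc ‖(A * B).trace‖
      ≤ ∑ i : Fin n, ∑ j : Fin n, α i * β j * C i j := habs
    _ = ∑ i ∈ range n, ∑ j ∈ range n, α' i * β' j * C' i j := hdouble
    _ ≤ ∑ i ∈ range n, α' i * β' i :=
        vn_key n α' β' C' hα'step hβ'step hα'n hβ'n hC'0 hC'row hC'col
    _ = ∑ i : Fin n, α i * β i := hsingle.symm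
end

section
/- (Eckart–Young, Frobenius norm) Let S ∈ ℝ^{n×m} with SVD S = UΣVᵀ and singular values σ₁ ≥ ... ≥ σ_{min(n,m)}. For any matrix B of rank at most k, ‖S − B‖_F² ≥ Σ_{i>k} σ_i², with equality for B = U_k Σ_k V_kᵀ (the rank-k truncated SVD). -/
open Matrix BigOperators

/-- Squared Frobenius norm. -/
def frobSq {a b : ℕ} (M : Matrix (Fin a) (Fin b) ℝ) : ℝ :=
  ∑ i : Fin a, ∑ j : Fin b, M i j ^ 2

open Finset in
set_option maxHeartbeats 2000000 in
/-- A rank-`≤ d` matrix has columns in the span of `d` orthonormal vectors. -/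
lemma EY.exists_orthonormal {n m : ℕ} (C : Matrix (Fin n) (Fin m) ℝ) :
    ∃ (d : ℕ) (w : Fin d → (Fin n → ℝ)),
      d = C.rank ∧
      (∀ s t, (∑ i, w s i * w t i) = if s = t then 1 else 0) ∧
      (∀ j : Fin m, ∃ c : Fin d → ℝ, ∀ i, C i j = ∑ t, c t * w t i) := by
  classical
  let e : (Fin n → ℝ) ≃ₗ[ℝ] EuclideanSpace ℝ (Fin n) :=
    (WithLp.linearEquiv 2 ℝ (Fin n → ℝ)).symm
  let W : Submodule ℝ (EuclideanSpace ℝ (Fin n)) :=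
    (LinearMap.range C.mulVecLin).map e.toLinearMap
  have hfin : Module.finrank ℝ W = C.rank := by
    rw [Matrix.rank]
    exact LinearEquiv.finrank_map_eq e _
  let b := stdOrthonormalBasis ℝ W
  refine ⟨Module.finrank ℝ W, fun t i => (b t : EuclideanSpace ℝ (Fin n)) i, hfin, ?_, ?_⟩
  · intro s t
    have := b.orthonormal
    rw [orthonormal_iff_ite] at this
    have h := this s t
    rw [Submodule.coe_inner, PiLp.inner_apply] at h
    simpa [RCLike.inner_apply, mul_comm] using h
  · intro j
    have hmem : e (C *ᵥ Pi.single j 1) ∈ W :=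
      Submodule.mem_map_of_mem (LinearMap.mem_range_self _ _)
    set u : W := ⟨e (C *ᵥ Pi.single j 1), hmem⟩
    refine ⟨fun t => b.repr u t, fun i => ?_⟩
    have h := b.sum_repr u
    have h2 := congrArg (fun (x : W) => (x : EuclideanSpace ℝ (Fin n)) i) h
    simp only [Submodule.coe_sum, Submodule.coe_smul] at h2
    have h3 : (∑ t, b.repr u t • (b t : EuclideanSpace ℝ (Fin n))) i = C i j := by
      rw [h2]
      show (C *ᵥ Pi.single j 1) i = C i j
      simp
    rw [← h3]
    have h4 : ∀ (N : ℕ) (f : Fin N → (Fin n → ℝ)), (∑ x, f x) i = ∑ x, f x i :=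
      fun N f => Finset.sum_apply i Finset.univ f
    rw [WithLp.ofLp_sum]
    simp only [WithLp.ofLp_smul]
    exact (h4 _ fun x => b.repr u x • ((b x : EuclideanSpace ℝ (Fin n)) : Fin n → ℝ)).trans
      (by simp [smul_eq_mul])

lemma EY.frobSq_eq_trace {a b : ℕ} (M : Matrix (Fin a) (Fin b) ℝ) :
    frobSq M = Matrix.trace (Mᵀ * M) := by
  simp [frobSq, Matrix.trace, Matrix.mul_apply, Matrix.diag, pow_two]
  rw [Finset.sum_comm]

lemma EY.frobSq_conj {a b : ℕ} (U : Matrix (Fin a) (Fin a) ℝ) (V : Matrix (Fin b) (Fin b) ℝ)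
    (hU : Uᵀ * U = 1) (hV : Vᵀ * V = 1) (M : Matrix (Fin a) (Fin b) ℝ) :
    frobSq (U * M * Vᵀ) = frobSq M := by
  rw [EY.frobSq_eq_trace, EY.frobSq_eq_trace]
  have : (U * M * Vᵀ)ᵀ * (U * M * Vᵀ) = V * (Mᵀ * M) * Vᵀ := by
    simp only [Matrix.transpose_mul, Matrix.transpose_transpose]
    calc V * (Mᵀ * Uᵀ) * (U * M * Vᵀ) = V * (Mᵀ * ((Uᵀ * U) * M)) * Vᵀ := by
          simp only [Matrix.mul_assoc]
      _ = V * (Mᵀ * M) * Vᵀ := by rw [hU, Matrix.one_mul]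
  rw [this, Matrix.trace_mul_cycle, hV, Matrix.one_mul]

open Finset in
lemma EY.expand_sq {N d : ℕ} (w : Fin d → (Fin N → ℝ))
    (hw : ∀ s t, (∑ i, w s i * w t i) = if s = t then 1 else 0)
    (v : Fin N → ℝ) (c : Fin d → ℝ) :
    ∑ i, (v i - ∑ t, c t * w t i) ^ 2 =
      (∑ i, v i ^ 2) - 2 * (∑ t, c t * (∑ i, v i * w t i)) + ∑ t, c t ^ 2 := by
  have claim1 : ∑ i, v i * (∑ t, c t * w t i) = ∑ t, c t * (∑ i, v i * w t i) := by
    simp only [Finset.mul_sum]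
    rw [Finset.sum_comm]
    refine Finset.sum_congr rfl fun t _ => Finset.sum_congr rfl fun i _ => by ring
  have claim2 : ∑ i, (∑ t, c t * w t i) ^ 2 = ∑ t, c t ^ 2 := by
    have step : ∀ i, (∑ t, c t * w t i) ^ 2
        = ∑ t, ∑ s, (c t * c s) * (w t i * w s i) := by
      intro i
      rw [sq, Finset.sum_mul_sum]
      exact Finset.sum_congr rfl fun t _ => Finset.sum_congr rfl fun s _ => by ring
    rw [Finset.sum_congr rfl fun i _ => step i, Finset.sum_comm]
    have inner : ∀ t, ∑ s, ∑ i, (c t * c s) * (w t i * w s i) = c t ^ 2 := by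
      intro t
      have h2 : ∀ s, ∑ i, (c t * c s) * (w t i * w s i)
          = c t * c s * (if t = s then 1 else 0) := by
        intro s
        rw [← Finset.mul_sum, hw t s]
      rw [Finset.sum_congr rfl fun s _ => h2 s]
      simp [sq]
    have swap : ∀ t, ∑ i, ∑ s, (c t * c s) * (w t i * w s i)
        = ∑ s, ∑ i, (c t * c s) * (w t i * w s i) := fun t => by rw [Finset.sum_comm]
    rw [Finset.sum_congr rfl fun t _ => (swap t).trans (inner t)]
  have step : ∀ i, (v i - ∑ t, c t * w t i) ^ 2
      = v i ^ 2 - 2 * (v i * (∑ t, c t * w t i)) + (∑ t, c t * w t i) ^ 2 := by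
    intro i; ring
  rw [Finset.sum_congr rfl fun i _ => step i, Finset.sum_add_distrib,
    Finset.sum_sub_distrib, claim2, ← Finset.mul_sum, claim1]

open Finset in
lemma EY.bestapprox {N d : ℕ} (w : Fin d → (Fin N → ℝ))
    (hw : ∀ s t, (∑ i, w s i * w t i) = if s = t then 1 else 0)
    (v : Fin N → ℝ) (c : Fin d → ℝ) :
    (∑ i, v i ^ 2) - (∑ t, (∑ i, v i * w t i) ^ 2) ≤
      ∑ i, (v i - ∑ t, c t * w t i) ^ 2 := by
  rw [EY.expand_sq w hw v c]
  set a : Fin d → ℝ := fun t => ∑ i, v i * w t i with ha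
  have h : (0:ℝ) ≤ ∑ t, (c t - a t) ^ 2 := Finset.sum_nonneg fun t _ => sq_nonneg _
  have h2 : ∑ t, (c t - a t) ^ 2
      = (∑ t, c t ^ 2) - 2 * (∑ t, c t * a t) + ∑ t, a t ^ 2 := by
    have step : ∀ t, (c t - a t) ^ 2 = c t ^ 2 - 2 * (c t * a t) + a t ^ 2 :=
      fun t => by ring
    rw [Finset.sum_congr rfl fun t _ => step t, Finset.sum_add_distrib,
      Finset.sum_sub_distrib, ← Finset.mul_sum]
  rw [h2] at h
  linarith

open Finset in
lemma EY.bessel {N d : ℕ} (w : Fin d → (Fin N → ℝ))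
    (hw : ∀ s t, (∑ i, w s i * w t i) = if s = t then 1 else 0)
    (j : Fin N) : (∑ t, (w t j) ^ 2) ≤ 1 := by
  have h := EY.expand_sq w hw (fun i => if i = j then 1 else 0) (fun t => w t j)
  have h0 : (0:ℝ) ≤ ∑ i, ((if i = j then (1:ℝ) else 0) - ∑ t, w t j * w t i) ^ 2 :=
    Finset.sum_nonneg fun i _ => sq_nonneg _
  rw [h] at h0
  have e1 : ∑ i, (if i = j then (1:ℝ) else 0) ^ 2 = 1 := by
    simp [ite_pow]
  have e2 : ∀ t : Fin d, ∑ i, (if i = j then (1:ℝ) else 0) * w t i = w t j := by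
    intro t; simp [ite_mul]
  have e3 : ∑ t, w t j * (∑ i, (if i = j then (1:ℝ) else 0) * w t i)
      = ∑ t, (w t j) ^ 2 := by
    refine Finset.sum_congr rfl fun t _ => ?_
    rw [e2 t]; ring
  rw [e1, e3] at h0
  linarith

open Finset in
lemma EY.parseval {N d : ℕ} (w : Fin d → (Fin N → ℝ))
    (hw : ∀ s t, (∑ i, w s i * w t i) = if s = t then 1 else 0) :
    ∑ j, ∑ t, (w t j) ^ 2 = d := by
  rw [Finset.sum_comm]
  have : ∀ t, ∑ j, (w t j) ^ 2 = 1 := by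
    intro t
    have := hw t t
    simpa [sq] using this
  rw [Finset.sum_congr rfl fun t _ => this t]
  simp

open Finset in
lemma EY.combinatorial {n k r : ℕ} (hkr : k ≤ r) (hrn : r ≤ n)
    (σ : ℕ → ℝ) (hσ : Antitone σ) (hσ0 : ∀ i, 0 ≤ σ i)
    (q : ℕ → ℝ) (hq0 : ∀ j, 0 ≤ q j) (hq1 : ∀ j, q j ≤ 1)
    (hqs : ∑ j ∈ range n, q j ≤ k) :
    ∑ j ∈ Finset.Ico k r, σ j ^ 2 ≤ ∑ j ∈ range r, σ j ^ 2 * (1 - q j) := by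
  have hsplit : range r = range k ∪ Ico k r := by
    rw [Finset.range_eq_Ico, Finset.range_eq_Ico]
    exact (Finset.Ico_union_Ico_eq_Ico (Nat.zero_le k) hkr).symm
  have hdisj : Disjoint (range k) (Ico k r) := by
    rw [Finset.range_eq_Ico]
    exact Finset.Ico_disjoint_Ico_consecutive 0 k r
  rw [hsplit, Finset.sum_union hdisj]
  have h1 : σ k ^ 2 * (∑ j ∈ range k, (1 - q j)) ≤ ∑ j ∈ range k, σ j ^ 2 * (1 - q j) := by
    rw [Finset.mul_sum]
    refine Finset.sum_le_sum fun j hj => ?_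
    have hjk : j ≤ k := le_of_lt (Finset.mem_range.mp hj)
    have : σ k ≤ σ j := hσ hjk
    have h1q : 0 ≤ 1 - q j := by linarith [hq1 j]
    exact mul_le_mul_of_nonneg_right (pow_le_pow_left₀ (hσ0 k) this 2) h1q
  have h2 : ∑ j ∈ Ico k r, σ j ^ 2 * q j ≤ σ k ^ 2 * (∑ j ∈ Ico k r, q j) := by
    rw [Finset.mul_sum]
    refine Finset.sum_le_sum fun j hj => ?_
    have hkj : k ≤ j := (Finset.mem_Ico.mp hj).1
    exact mul_le_mul_of_nonneg_right (pow_le_pow_left₀ (hσ0 j) (hσ hkj) 2) (hq0 j)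
  have h3 : ∑ j ∈ range k, (1 - q j) - ∑ j ∈ Ico k r, q j ≥ 0 := by
    rw [Finset.sum_sub_distrib, Finset.sum_const, Finset.card_range, nsmul_eq_mul, mul_one]
    have : ∑ j ∈ range k, q j + ∑ j ∈ Ico k r, q j = ∑ j ∈ range r, q j := by
      rw [hsplit, Finset.sum_union hdisj]
    have hle : ∑ j ∈ range r, q j ≤ ∑ j ∈ range n, q j := by
      refine Finset.sum_le_sum_of_subset_of_nonneg
        (Finset.range_subset_range.mpr hrn) fun j _ _ => hq0 j
    linarith
  have h4 : ∑ j ∈ Ico k r, σ j ^ 2 * (1 - q j)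
      = ∑ j ∈ Ico k r, σ j ^ 2 - ∑ j ∈ Ico k r, σ j ^ 2 * q j := by
    rw [← Finset.sum_sub_distrib]
    exact Finset.sum_congr rfl fun j _ => by ring
  have hσk : 0 ≤ σ k ^ 2 := sq_nonneg _
  nlinarith [h1, h2, h3, h4]

open Finset in
lemma EY.lower_bound {n m k : ℕ} (σ : ℕ → ℝ) (hσ : Antitone σ) (hσ0 : ∀ i, 0 ≤ σ i)
    (C : Matrix (Fin n) (Fin m) ℝ) (hC : C.rank ≤ k) :
    (∑ i ∈ Finset.Ico k (min n m), σ i ^ 2) ≤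
      frobSq ((Matrix.of fun (i : Fin n) (j : Fin m) =>
        if (i:ℕ) = (j:ℕ) then σ (i:ℕ) else 0) - C) := by
  classical
  set r := min n m with hr
  by_cases hkr : r ≤ k
  · rw [Finset.Ico_eq_empty (by omega)]
    simp only [Finset.sum_empty]
    exact Finset.sum_nonneg fun i _ => Finset.sum_nonneg fun j _ => sq_nonneg _
  push_neg at hkr
  have hkr' : k ≤ r := le_of_lt hkr
  have hrn : r ≤ n := min_le_left _ _
  have hrm : r ≤ m := min_le_right _ _
  obtain ⟨d, w, hd, hw, hcol⟩ := EY.exists_orthonormal C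
  have hdk : d ≤ k := hd ▸ hC
  set q : ℕ → ℝ := fun j => if h : j < n then ∑ t, (w t ⟨j, h⟩)^2 else 0 with hq
  have hq0 : ∀ j, 0 ≤ q j := by
    intro j
    simp only [hq]
    split
    · exact Finset.sum_nonneg fun t _ => sq_nonneg _
    · exact le_refl 0
  have hq1 : ∀ j, q j ≤ 1 := by
    intro j
    simp only [hq]
    split
    · exact EY.bessel w hw _
    · norm_num
  have hqs : ∑ j ∈ range n, q j ≤ (k:ℝ) := by
    have e1 : ∑ j ∈ range n, q j = ∑ j : Fin n, q (j:ℕ) :=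
      (Fin.sum_univ_eq_sum_range (fun j => q j) n).symm
    have e2 : ∀ j : Fin n, q (j:ℕ) = ∑ t, (w t j)^2 := by
      intro j
      simp only [hq]
      rw [dif_pos j.isLt]
    rw [e1, Finset.sum_congr rfl fun j _ => e2 j, EY.parseval w hw]
    exact_mod_cast hdk
  set D : Matrix (Fin n) (Fin m) ℝ :=
    Matrix.of fun (i : Fin n) (j : Fin m) => if (i:ℕ) = (j:ℕ) then σ (i:ℕ) else 0 with hD
  set g : ℕ → ℝ := fun j => if h : j < n then σ j ^ 2 * (1 - q j) else 0 with hg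
  have percol : ∀ j : Fin m, g (j:ℕ) ≤ ∑ i, (D i j - C i j)^2 := by
    intro j
    by_cases h : (j:ℕ) < n
    · have hgj : g (j:ℕ) = σ (j:ℕ) ^ 2 * (1 - q (j:ℕ)) := by
        simp only [hg]; rw [dif_pos h]
      rw [hgj]
      set j' : Fin n := ⟨(j:ℕ), h⟩ with hj'
      set v : Fin n → ℝ := fun i => if i = j' then σ (j:ℕ) else 0 with hv
      have hDv : ∀ i, D i j = v i := by
        intro i
        simp only [hD, hv, Matrix.of_apply]
        by_cases hij : i = j'
        · subst hij; simp [hj']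
        · have : (i:ℕ) ≠ (j:ℕ) := fun hc => hij (Fin.ext hc)
          rw [if_neg this, if_neg hij]
      obtain ⟨c, hc⟩ := hcol j
      have key := EY.bestapprox w hw v c
      have ev : ∑ i, v i ^ 2 = σ (j:ℕ) ^ 2 := by
        simp [hv, ite_pow, Finset.sum_ite_eq']
      have ea : ∀ t, ∑ i, v i * w t i = σ (j:ℕ) * w t j' := by
        intro t
        simp [hv, ite_mul, Finset.sum_ite_eq']
      have eq2 : ∑ t, (∑ i, v i * w t i) ^ 2 = σ (j:ℕ)^2 * q (j:ℕ) := by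
        rw [Finset.sum_congr rfl fun t _ => by rw [ea t]]
        simp only [hq]
        rw [dif_pos h, Finset.mul_sum]
        exact Finset.sum_congr rfl fun t _ => by rw [mul_pow]
      have erhs : ∑ i, (v i - ∑ t, c t * w t i) ^ 2 = ∑ i, (D i j - C i j)^2 := by
        refine Finset.sum_congr rfl fun i _ => ?_
        rw [hDv i, hc i]
      rw [ev, eq2, erhs] at key
      linarith [key]
    · have hgj : g (j:ℕ) = 0 := by simp only [hg]; rw [dif_neg h]
      rw [hgj]
      exact Finset.sum_nonneg fun i _ => sq_nonneg _
  have hfrob : frobSq (D - C) = ∑ j : Fin m, ∑ i : Fin n, (D i j - C i j)^2 := by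
    rw [frobSq, Finset.sum_comm]
    rfl
  have step1 : ∑ j : Fin m, g (j:ℕ) ≤ frobSq (D - C) := by
    rw [hfrob]
    exact Finset.sum_le_sum fun j _ => percol j
  have step2 : ∑ j : Fin m, g (j:ℕ) = ∑ j ∈ range m, g j :=
    Fin.sum_univ_eq_sum_range (fun j => g j) m
  have step3 : ∑ j ∈ range m, g j = ∑ j ∈ range r, σ j ^ 2 * (1 - q j) := by
    rw [← Finset.sum_subset (Finset.range_subset_range.mpr hrm)]
    · refine Finset.sum_congr rfl fun j hj => ?_
      have hjr : j < r := Finset.mem_range.mp hj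
      simp only [hg]
      rw [dif_pos (by omega : j < n)]
    · intro j hjm hjr
      have h1 : j < m := Finset.mem_range.mp hjm
      have h2 : ¬ j < r := fun hc => hjr (Finset.mem_range.mpr hc)
      simp only [hg]
      rw [dif_neg (by omega : ¬ j < n)]
  have main := EY.combinatorial hkr' hrn σ hσ hσ0 q hq0 hq1 hqs
  calc ∑ i ∈ Finset.Ico k r, σ i ^ 2 ≤ ∑ j ∈ range r, σ j ^ 2 * (1 - q j) := main
    _ = ∑ j ∈ range m, g j := step3.symm
    _ = ∑ j : Fin m, g (j:ℕ) := step2.symm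
    _ ≤ frobSq (D - C) := step1

open Finset in
lemma EY.diag_part {n m k : ℕ} (σ : ℕ → ℝ) :
    frobSq ((Matrix.of fun (i : Fin n) (j : Fin m) => if (i:ℕ) = (j:ℕ) then σ (i:ℕ) else 0)
      - (Matrix.of fun (i : Fin n) (j : Fin m) =>
          if (i:ℕ) = (j:ℕ) ∧ (i:ℕ) < k then σ (i:ℕ) else 0))
      = ∑ i ∈ Finset.Ico k (min n m), σ i ^ 2 := by
  rw [frobSq]
  have entry : ∀ (i : Fin n) (j : Fin m),
      (((Matrix.of fun (i : Fin n) (j : Fin m) => if (i:ℕ) = (j:ℕ) then σ (i:ℕ) else 0)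
      - (Matrix.of fun (i : Fin n) (j : Fin m) =>
          if (i:ℕ) = (j:ℕ) ∧ (i:ℕ) < k then σ (i:ℕ) else 0)) i j) ^ 2
      = if (i:ℕ) = (j:ℕ) ∧ k ≤ (i:ℕ) then σ (i:ℕ) ^ 2 else 0 := by
    intro i j
    simp only [Matrix.sub_apply, Matrix.of_apply]
    split_ifs with h1 h2 h3 h4 h5 <;> try (exfalso; omega)
    all_goals ring
  have inner : ∀ i : Fin n, ∑ j : Fin m,
      (if (i:ℕ) = (j:ℕ) ∧ k ≤ (i:ℕ) then σ (i:ℕ) ^ 2 else 0)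
      = if (i:ℕ) < m ∧ k ≤ (i:ℕ) then σ (i:ℕ) ^ 2 else 0 := by
    intro i
    rw [Fin.sum_univ_eq_sum_range
      (fun jn => if (i:ℕ) = jn ∧ k ≤ (i:ℕ) then σ (i:ℕ) ^ 2 else 0) m]
    by_cases hk : k ≤ (i:ℕ)
    · simp only [hk, and_true]
      rw [Finset.sum_ite_eq (range m) (i:ℕ) (fun _ => σ (i:ℕ)^2)]
      simp
    · simp [hk]
  calc ∑ i : Fin n, ∑ j : Fin m,
        (((Matrix.of fun (i : Fin n) (j : Fin m) => if (i:ℕ) = (j:ℕ) then σ (i:ℕ) else 0)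
        - (Matrix.of fun (i : Fin n) (j : Fin m) =>
            if (i:ℕ) = (j:ℕ) ∧ (i:ℕ) < k then σ (i:ℕ) else 0)) i j) ^ 2
      = ∑ i : Fin n, (if (i:ℕ) < m ∧ k ≤ (i:ℕ) then σ (i:ℕ) ^ 2 else 0) := by
        refine Finset.sum_congr rfl fun i _ => ?_
        rw [Finset.sum_congr rfl fun j _ => entry i j, inner i]
    _ = ∑ i ∈ range n, (if i < m ∧ k ≤ i then σ i ^ 2 else 0) :=
        Fin.sum_univ_eq_sum_range (fun i => if i < m ∧ k ≤ i then σ i ^ 2 else 0) n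
    _ = ∑ i ∈ (range n).filter (fun i => i < m ∧ k ≤ i), σ i ^ 2 :=
        (Finset.sum_filter _ _).symm
    _ = ∑ i ∈ Finset.Ico k (min n m), σ i ^ 2 := by
        refine Finset.sum_congr ?_ fun _ _ => rfl
        ext i
        simp only [Finset.mem_filter, Finset.mem_range, Finset.mem_Ico]
        omega

/-- Eckart–Young theorem (Frobenius norm). -/
theorem stmt10 {n m k : ℕ}
    (S : Matrix (Fin n) (Fin m) ℝ)
    (U : Matrix (Fin n) (Fin n) ℝ) (V : Matrix (Fin m) (Fin m) ℝ)
    (σ : ℕ → ℝ) (hσ : Antitone σ) (hσ0 : ∀ i, 0 ≤ σ i)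
    (hσz : ∀ i, min n m ≤ i → σ i = 0)
    (hU : Uᵀ * U = 1) (hU' : U * Uᵀ = 1)
    (hV : Vᵀ * V = 1) (hV' : V * Vᵀ = 1)
    (hS : S = U * (Matrix.of fun (i : Fin n) (j : Fin m) => if (i : ℕ) = (j : ℕ) then σ (i : ℕ) else 0) * Vᵀ) :
    (∀ B : Matrix (Fin n) (Fin m) ℝ, B.rank ≤ k →
        (∑ i ∈ Finset.Ico k (min n m), σ i ^ 2) ≤ frobSq (S - B)) ∧
    frobSq (S - U * (Matrix.of fun (i : Fin n) (j : Fin m) =>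
        if (i : ℕ) = (j : ℕ) ∧ (i : ℕ) < k then σ (i : ℕ) else 0) * Vᵀ) =
      ∑ i ∈ Finset.Ico k (min n m), σ i ^ 2 := by
  set Sig : Matrix (Fin n) (Fin m) ℝ :=
    Matrix.of fun (i : Fin n) (j : Fin m) => if (i:ℕ) = (j:ℕ) then σ (i:ℕ) else 0 with hSig
  constructor
  · intro B hB
    set C : Matrix (Fin n) (Fin m) ℝ := Uᵀ * B * V with hCdef
    have hCrank : C.rank ≤ k := by
      calc C.rank ≤ (Uᵀ * B).rank := Matrix.rank_mul_le_left _ _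
        _ ≤ B.rank := Matrix.rank_mul_le_right _ _
        _ ≤ k := hB
    have hSB : S - B = U * (Sig - C) * Vᵀ := by
      rw [Matrix.mul_sub, Matrix.sub_mul, hS, hCdef]
      have hres : U * (Uᵀ * B * V) * Vᵀ = B := by
        calc U * (Uᵀ * B * V) * Vᵀ = (U * Uᵀ) * B * (V * Vᵀ) := by
              simp only [Matrix.mul_assoc]
          _ = B := by rw [hU', hV', Matrix.one_mul, Matrix.mul_one]
      rw [hres]
    rw [hSB, EY.frobSq_conj U V hU hV]
    exact EY.lower_bound σ hσ hσ0 C hCrank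
  · set Sigk : Matrix (Fin n) (Fin m) ℝ :=
      Matrix.of fun (i : Fin n) (j : Fin m) =>
        if (i:ℕ) = (j:ℕ) ∧ (i:ℕ) < k then σ (i:ℕ) else 0 with hSigk
    have hSB : S - U * Sigk * Vᵀ = U * (Sig - Sigk) * Vᵀ := by
      rw [Matrix.mul_sub, Matrix.sub_mul, hS]
    rw [hSB, EY.frobSq_conj U V hU hV]
    exact EY.diag_part σ
end

section
/- Let A be a symmetric n×n matrix with eigenvalues λ₁ > λ₂ > ... > λ_k > λ_{k+1} ≥ ... (the top k eigenvalues simple and separated from the rest), with orthonormal eigenvectors u₁, ..., u_k. If B = Σ_{j=1}^k w_j p_j p_jᵀ with strictly decreasing positive weights w_j, orthonormal p_j, and Tr(AB) = Σ_{j=1}^k w_j λ_j, then p_j = ± u_j for each j = 1,...,k. -/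
open Matrix BigOperators

lemma abel14 (w P : ℕ → ℝ) (hP0 : P 0 = 0) (N : ℕ) :
    ∑ j ∈ Finset.range (N+1), w j * (P (j+1) - P j)
      = w N * P (N+1) + ∑ m ∈ Finset.range N, (w m - w (m+1)) * P (m+1) := by
  induction N with
  | zero => simp [hP0]
  | succ N ih =>
      rw [Finset.sum_range_succ, ih, Finset.sum_range_succ]
      ring

lemma filterlt14 (K m : ℕ) (hm : m ≤ K) (f : ℕ → ℝ) :
    ∑ j ∈ Finset.univ.filter (fun j : Fin K => (j:ℕ) < m), f (j:ℕ)
      = ∑ t ∈ Finset.range m, f t := by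
  rw [Finset.sum_filter, Fin.sum_univ_eq_sum_range (fun t => if t < m then f t else 0)]
  rw [← Finset.sum_filter]
  congr 1
  ext t; simp; omega

lemma thresh14 {n : ℕ} (lam : Fin n → ℝ) (hlam : Antitone lam) (m : ℕ) (hm : m ≤ n)
    (hgt : ∀ i : Fin n, (i:ℕ) < m → ∀ hmn : m < n, lam ⟨m, hmn⟩ < lam i)
    (s : Fin n → ℝ) (h0 : ∀ i, 0 ≤ s i) (h1 : ∀ i, s i ≤ 1) (hsum : ∑ i, s i = (m:ℝ)) :
    ∑ i, lam i * s i ≤ ∑ i ∈ Finset.univ.filter (fun i : Fin n => (i:ℕ) < m), lam i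
    ∧ (∑ i, lam i * s i = ∑ i ∈ Finset.univ.filter (fun i : Fin n => (i:ℕ) < m), lam i →
       ∀ i : Fin n, s i = if (i:ℕ) < m then 1 else 0) := by
  rcases eq_or_lt_of_le hm with hmn | hmn
  · have hall : ∀ i, s i = 1 := by
      have hz : ∑ i : Fin n, (1 - s i) = 0 := by
        rw [Finset.sum_sub_distrib, hsum]
        simp [hmn]
      have := (Finset.sum_eq_zero_iff_of_nonneg (fun i _ => by linarith [h1 i])).mp hz
      intro i; have := this i (Finset.mem_univ i); linarith
    have hfil : Finset.univ.filter (fun i : Fin n => (i:ℕ) < m) = Finset.univ := by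
      ext i; simp; omega
    have heq : ∑ i, lam i * s i = ∑ i ∈ Finset.univ.filter (fun i : Fin n => (i:ℕ) < m), lam i := by
      rw [hfil]; exact Finset.sum_congr rfl fun i _ => by rw [hall i, mul_one]
    exact ⟨le_of_eq heq, fun _ i => by rw [hall i, if_pos (by omega : (i:ℕ) < m)]⟩
  · set c : ℝ := lam ⟨m, hmn⟩ with hc
    set g : Fin n → ℝ := fun i => if (i:ℕ) < m then (lam i - c) * (1 - s i) else (c - lam i) * s i with hg
    have term : ∀ i : Fin n,
        (if (i:ℕ) < m then lam i else 0) - lam i * s i + c * s i - (if (i:ℕ) < m then c else 0)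
          = g i := by
      intro i; by_cases h : (i:ℕ) < m <;> simp [hg, h] <;> ring
    have hone : ∑ i ∈ Finset.univ.filter (fun i : Fin n => (i:ℕ) < m), (1:ℝ) = m := by
      have := filterlt14 n m hm (fun _ => (1:ℝ)); simpa using this
    have hcs : ∑ i ∈ Finset.univ.filter (fun i : Fin n => (i:ℕ) < m), c = c * m := by
      rw [← hone, Finset.mul_sum]; simp
    have main : ∑ i ∈ Finset.univ.filter (fun i : Fin n => (i:ℕ) < m), lam i - ∑ i, lam i * s i
        = ∑ i : Fin n, g i := by
      have h1' : ∑ i : Fin n, g i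
          = (∑ i : Fin n, (if (i:ℕ) < m then lam i else 0)) - (∑ i, lam i * s i)
            + c * (∑ i, s i) - (∑ i : Fin n, (if (i:ℕ) < m then c else 0)) := by
        rw [Finset.mul_sum, ← Finset.sum_sub_distrib, ← Finset.sum_add_distrib,
          ← Finset.sum_sub_distrib]
        exact Finset.sum_congr rfl fun i _ => (term i).symm
      rw [h1', ← Finset.sum_filter, ← Finset.sum_filter, hsum, hcs]; ring
    have gnn : ∀ i : Fin n, 0 ≤ g i := by
      intro i
      by_cases h : (i:ℕ) < m
      · have hle : lam ⟨m, hmn⟩ ≤ lam i := hlam (by simp [Fin.le_def]; omega)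
        have := h1 i
        simp only [hg, if_pos h]
        apply mul_nonneg <;> [skip; linarith]
        rw [hc]; linarith
      · have hle : lam i ≤ lam ⟨m, hmn⟩ := hlam (by simp [Fin.le_def]; omega)
        simp only [hg, if_neg h]
        apply mul_nonneg
        · rw [hc]; linarith
        · exact h0 i
    constructor
    · have : 0 ≤ ∑ i : Fin n, g i := Finset.sum_nonneg fun i _ => gnn i
      linarith [main]
    · intro heq i
      have hz : ∑ i : Fin n, g i = 0 := by linarith [main]
      have hgz : ∀ i : Fin n, g i = 0 := by
        intro i
        exact (Finset.sum_eq_zero_iff_of_nonneg (fun i _ => gnn i)).mp hz i (Finset.mem_univ i)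
      have hlt1 : ∀ i : Fin n, (i:ℕ) < m → s i = 1 := by
        intro i hi
        have := hgz i
        simp only [hg, if_pos hi] at this
        rcases mul_eq_zero.mp this with h | h
        · exact absurd h (by have := hgt i hi hmn; rw [hc] at *; intro hh; linarith)
        · linarith
      by_cases h : (i:ℕ) < m
      · rw [if_pos h]; exact hlt1 i h
      · rw [if_neg h]
        have hfs : ∑ i ∈ Finset.univ.filter (fun i : Fin n => (i:ℕ) < m), s i = m := by
          rw [← hone]
          exact Finset.sum_congr rfl fun i hi => by
            rw [hlt1 i (by simpa using hi)]
        have hrest : ∑ i ∈ Finset.univ.filter (fun i : Fin n => ¬ (i:ℕ) < m), s i = 0 := by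
          have := Finset.sum_filter_add_sum_filter_not Finset.univ
            (fun i : Fin n => (i:ℕ) < m) s
          rw [hfs] at this; rw [hsum] at this; linarith
        exact (Finset.sum_eq_zero_iff_of_nonneg (fun i _ => h0 i)).mp hrest i (by simp; omega)

lemma expand14 {n : ℕ} (u : Fin n → (Fin n → ℝ))
    (hu : ∀ i j, u i ⬝ᵥ u j = if i = j then (1 : ℝ) else 0) (v : Fin n → ℝ) :
    ∑ i, (v ⬝ᵥ u i) • u i = v := by
  set U : Matrix (Fin n) (Fin n) ℝ := Matrix.of u with hU
  have hUU : U * Uᵀ = 1 := by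
    ext i j
    have := hu i j
    simpa [Matrix.mul_apply, Matrix.one_apply, dotProduct, hU] using this
  have hUU' : Uᵀ * U = 1 := mul_eq_one_comm.mp hUU
  have horth : ∀ t m' : Fin n, (∑ i, u i t * u i m') = if t = m' then (1:ℝ) else 0 := by
    intro t m'
    have := congrFun (congrFun hUU' t) m'
    simpa [Matrix.mul_apply, Matrix.one_apply, hU] using this
  funext m
  simp only [Finset.sum_apply, Pi.smul_apply, smul_eq_mul, dotProduct]
  calc ∑ i, (∑ t, v t * u i t) * u i m
      = ∑ i, ∑ t, v t * (u i t * u i m) := by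
        apply Finset.sum_congr rfl; intro i _; rw [Finset.sum_mul]
        apply Finset.sum_congr rfl; intro t _; ring
    _ = ∑ t, v t * ∑ i, u i t * u i m := by
        rw [Finset.sum_comm]
        apply Finset.sum_congr rfl; intro t _; rw [Finset.mul_sum]
    _ = v m := by
        simp only [horth]
        simp [Finset.sum_ite_eq]


lemma dotsum14 {m K : Type*} [Fintype m] [Fintype K] (v : m → ℝ) (f : K → m → ℝ) :
    v ⬝ᵥ (∑ j, f j) = ∑ j, v ⬝ᵥ f j := by
  simp only [dotProduct, Finset.sum_apply, Finset.mul_sum]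
  exact Finset.sum_comm

lemma sumdot14 {m K : Type*} [Fintype m] [Fintype K] (v : m → ℝ) (f : K → m → ℝ) :
    (∑ j, f j) ⬝ᵥ v = ∑ j, f j ⬝ᵥ v := by
  simp only [dotProduct, Finset.sum_apply, Finset.sum_mul]
  exact Finset.sum_comm

theorem stmt14 {n k : ℕ} (hk : k ≤ n)
    (A : Matrix (Fin n) (Fin n) ℝ) (hA : A.IsSymm)
    (u : Fin n → (Fin n → ℝ)) (lam : Fin n → ℝ)
    (hu : ∀ i j, u i ⬝ᵥ u j = if i = j then (1 : ℝ) else 0)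
    (heig : ∀ i, A *ᵥ u i = lam i • u i)
    (hlam : Antitone lam)
    -- the top k eigenvalues are simple and separated from the rest
    (hgap : ∀ i j : Fin n, (i : ℕ) < (j : ℕ) → (i : ℕ) < k → lam j < lam i)
    (p : Fin k → (Fin n → ℝ))
    (hp : ∀ i j, p i ⬝ᵥ p j = if i = j then (1 : ℝ) else 0)
    (w : Fin k → ℝ)
    (hw : ∀ i j : Fin k, i < j → w j < w i) (hw0 : ∀ j, 0 < w j)
    (htr : (A * ∑ j : Fin k, w j • Matrix.vecMulVec (p j) (p j)).trace =
      ∑ j : Fin k, w j * lam (Fin.castLE hk j)) :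
    ∀ j : Fin k, p j = u (Fin.castLE hk j) ∨ p j = -(u (Fin.castLE hk j)) := by
  intro j0
  have hk0 : 0 < k := j0.pos
  set e : Fin k → Fin n := Fin.castLE hk with he
  set c : Fin k → Fin n → ℝ := fun j i => p j ⬝ᵥ u i with hc
  have hexp : ∀ j, ∑ i, c j i • u i = p j := fun j => expand14 u hu (p j)
  set d : Fin k → Fin n → ℝ := fun j i => (c j i)^2 with hd
  have hd0 : ∀ j i, 0 ≤ d j i := fun j i => sq_nonneg _
  -- row sums
  have hrow : ∀ j, ∑ i, d j i = 1 := by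
    intro j
    have h1 : p j ⬝ᵥ p j = 1 := by simpa using hp j j
    calc ∑ i, d j i = ∑ i, c j i * (p j ⬝ᵥ u i) := by
          apply Finset.sum_congr rfl; intro i _; simp [hd, hc, sq]
      _ = p j ⬝ᵥ (∑ i, c j i • u i) := by
          rw [dotsum14]
          apply Finset.sum_congr rfl; intro i _
          rw [dotProduct_smul]; simp
      _ = 1 := by rw [hexp j, h1]
  -- column sums ≤ 1
  have hcol : ∀ i, ∑ j, d j i ≤ 1 := by
    intro i
    set q : Fin n → ℝ := ∑ jj, c jj i • p jj with hq
    have huq : u i ⬝ᵥ q = ∑ jj, d jj i := by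
      rw [hq, dotsum14]
      apply Finset.sum_congr rfl; intro jj _
      rw [dotProduct_smul]
      have : u i ⬝ᵥ p jj = c jj i := by rw [dotProduct_comm]
      simp [this, hd, sq]
    have hqq : q ⬝ᵥ q = ∑ jj, d jj i := by
      rw [hq, dotsum14]
      have : ∀ jj : Fin k, (∑ jj' : Fin k, c jj' i • p jj') ⬝ᵥ (c jj i • p jj) = d jj i := by
        intro jj
        rw [dotProduct_smul, sumdot14]
        have : ∀ jj' : Fin k, (c jj' i • p jj') ⬝ᵥ p jj = c jj' i * (if jj' = jj then 1 else 0) := by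
          intro jj'
          rw [smul_dotProduct, hp jj' jj]; simp
        simp only [this]
        simp [Finset.sum_ite_eq', hd, sq]
      simp only [this]
    have hself : 0 ≤ (u i - q) ⬝ᵥ (u i - q) := by
      unfold dotProduct
      apply Finset.sum_nonneg
      intro t _
      exact mul_self_nonneg _
    have hexp2 : (u i - q) ⬝ᵥ (u i - q) = 1 - ∑ jj, d jj i := by
      have h1 : u i ⬝ᵥ u i = 1 := by simpa using hu i i
      have h2 : q ⬝ᵥ u i = ∑ jj, d jj i := by rw [dotProduct_comm]; exact huq
      rw [sub_dotProduct, dotProduct_sub, dotProduct_sub, h1, huq, h2, hqq]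
      ring
    linarith [hself, hexp2]
  -- Rayleigh quotients
  have hr : ∀ j, (p j) ⬝ᵥ (A *ᵥ p j) = ∑ i, lam i * d j i := by
    intro j
    have hAp : A *ᵥ p j = ∑ i, c j i • (lam i • u i) := by
      rw [← hexp j]
      rw [show A *ᵥ (∑ i, c j i • u i) = ∑ i, A *ᵥ (c j i • u i) from
        map_sum (Matrix.mulVecLin A) _ _]
      apply Finset.sum_congr rfl; intro i _
      rw [Matrix.mulVec_smul, heig i]
    rw [hAp, dotsum14]
    apply Finset.sum_congr rfl; intro i _
    rw [dotProduct_smul, dotProduct_smul]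
    simp [hd, hc, sq]
    ring
  -- trace identity
  have htr2 : ∑ j : Fin k, w j * (∑ i, lam i * d j i) = ∑ j : Fin k, w j * lam (e j) := by
    rw [← htr]
    rw [Matrix.mul_sum, Matrix.trace_sum]
    apply Finset.sum_congr rfl
    intro j _
    rw [Matrix.mul_smul, Matrix.trace_smul]
    rw [← hr j]
    have : (A * Matrix.vecMulVec (p j) (p j)).trace = p j ⬝ᵥ (A *ᵥ p j) := by
      simp only [Matrix.trace, Matrix.diag, Matrix.mul_apply, Matrix.vecMulVec_apply,
        dotProduct, Matrix.mulVec]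
      simp only [Finset.mul_sum]
      apply Finset.sum_congr rfl; intro i _
      apply Finset.sum_congr rfl; intro t _
      ring
    rw [this]; simp

  -- ℕ-indexed partial sum machinery
  set LAM : ℕ → ℝ := fun t => if h : t < n then lam ⟨t, h⟩ else 0 with hLAM
  set s : ℕ → Fin n → ℝ :=
    fun m i => ∑ jj ∈ Finset.univ.filter (fun jj : Fin k => (jj:ℕ) < m), d jj i with hs
  set R : ℕ → ℝ := fun m => ∑ i, lam i * s m i with hR
  set L : ℕ → ℝ := fun m => ∑ t ∈ Finset.range m, LAM t with hL
  set P : ℕ → ℝ := fun m => R m - L m with hP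
  set W : ℕ → ℝ := fun m => if h : m < k then w ⟨m, h⟩ else 0 with hW
  have hfil_lam : ∀ m, m ≤ k →
      ∑ i ∈ Finset.univ.filter (fun i : Fin n => (i:ℕ) < m), lam i = L m := by
    intro m hm
    rw [hL]; dsimp only; rw [← filterlt14 n m (hm.trans hk) LAM]
    apply Finset.sum_congr rfl; intro i _
    rw [hLAM]; simp [i.isLt]
  have hs0 : ∀ m i, 0 ≤ s m i := by
    intro m i; exact Finset.sum_nonneg fun jj _ => hd0 jj i
  have hs1 : ∀ m i, s m i ≤ 1 := by
    intro m i
    refine le_trans ?_ (hcol i)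
    exact Finset.sum_le_sum_of_subset_of_nonneg (Finset.filter_subset _ _)
      (fun jj _ _ => hd0 jj i)
  have hssum : ∀ m, m ≤ k → ∑ i, s m i = (m:ℝ) := by
    intro m hm
    rw [hs]
    rw [Finset.sum_comm]
    have : ∀ jj ∈ Finset.univ.filter (fun jj : Fin k => (jj:ℕ) < m),
        ∑ i, d jj i = (fun _ : ℕ => (1:ℝ)) (jj:ℕ) := fun jj _ => hrow jj
    rw [Finset.sum_congr rfl this, filterlt14 k m hm (fun _ => (1:ℝ))]
    simp
  have hgt' : ∀ m, m ≤ k → ∀ i : Fin n, (i:ℕ) < m → ∀ hmn : m < n, lam ⟨m, hmn⟩ < lam i :=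
    fun m hm i hi hmn => hgap i ⟨m, hmn⟩ hi (hi.trans_le hm)
  have hPle : ∀ m, m ≤ k → P m ≤ 0 := by
    intro m hm
    have := (thresh14 lam hlam m (hm.trans hk) (hgt' m hm) (s m) (hs0 m) (hs1 m)
      (hssum m hm)).1
    rw [hfil_lam m hm] at this
    rw [hP]; dsimp only; rw [hR]; dsimp only; linarith
  have hins : ∀ (t : ℕ) (ht : t < k),
      Finset.univ.filter (fun jj : Fin k => (jj:ℕ) < t+1)
        = insert ⟨t, ht⟩ (Finset.univ.filter (fun jj : Fin k => (jj:ℕ) < t)) := by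
    intro t ht
    ext jj; simp [Fin.ext_iff]; omega
  have hsrec : ∀ (t : ℕ) (ht : t < k) (i : Fin n), s (t+1) i = d ⟨t, ht⟩ i + s t i := by
    intro t ht i
    rw [hs]; dsimp only
    rw [hins t ht, Finset.sum_insert (by simp)]
  have hdelta : ∀ (t : ℕ) (ht : t < k),
      P (t+1) - P t = (∑ i, lam i * d ⟨t, ht⟩ i) - lam (e ⟨t, ht⟩) := by
    intro t ht
    have hRd : R (t+1) = (∑ i, lam i * d ⟨t, ht⟩ i) + R t := by
      rw [hR]; dsimp only
      rw [← Finset.sum_add_distrib]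
      apply Finset.sum_congr rfl; intro i _
      rw [hsrec t ht i]; ring
    have hLd : L (t+1) = L t + lam (e ⟨t, ht⟩) := by
      rw [hL]; dsimp only
      rw [Finset.sum_range_succ]
      congr 1
      rw [hLAM]; simp [ht.trans_le hk]
      rfl
    rw [hP]; dsimp only
    rw [hRd, hLd]; ring
  have htot : ∑ t ∈ Finset.range k, W t * (P (t+1) - P t) = 0 := by
    rw [← Fin.sum_univ_eq_sum_range (fun t => W t * (P (t+1) - P t)) k]
    have hterm : ∀ jj : Fin k,
        W (jj:ℕ) * (P ((jj:ℕ)+1) - P (jj:ℕ))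
          = w jj * ((∑ i, lam i * d jj i) - lam (e jj)) := by
      intro jj
      rw [hdelta (jj:ℕ) jj.isLt]
      rw [hW]; simp [jj.isLt]
    rw [Finset.sum_congr rfl fun jj _ => hterm jj]
    have : ∀ jj : Fin k, w jj * ((∑ i, lam i * d jj i) - lam (e jj))
        = w jj * (∑ i, lam i * d jj i) - w jj * lam (e jj) := fun jj => by ring
    rw [Finset.sum_congr rfl fun jj _ => this jj, Finset.sum_sub_distrib, htr2]
    ring
  obtain ⟨N, hN⟩ : ∃ N, k = N + 1 := ⟨k - 1, by omega⟩
  have hP0 : P 0 = 0 := by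
    rw [hP]; dsimp only
    have : R 0 = 0 := by
      rw [hR]; dsimp only
      apply Finset.sum_eq_zero; intro i _
      have : s 0 i = 0 := by rw [hs]; simp
      rw [this, mul_zero]
    rw [this, hL]; simp
  have habel := abel14 W P hP0 N
  rw [hN] at htot
  rw [habel] at htot
  -- all coefficients positive, all P ≤ 0
  have hPz : ∀ m, m ≤ k → P m = 0 := by
    have hc1 : 0 < W N := by rw [hW]; simp [show N < k by omega]; exact hw0 _
    have hc2 : ∀ m, m < N → 0 < W m - W (m+1) := by
      intro m hm
      rw [hW]; dsimp only
      rw [dif_pos (show m < k by omega), dif_pos (show m + 1 < k by omega)]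
      have := hw ⟨m, by omega⟩ ⟨m+1, by omega⟩ (by simp [Fin.lt_def])
      linarith
    have ht1 : W N * P (N+1) ≤ 0 :=
      mul_nonpos_of_nonneg_of_nonpos (le_of_lt hc1) (hPle (N+1) (by omega))
    have ht2 : ∀ m ∈ Finset.range N, (W m - W (m+1)) * P (m+1) ≤ 0 := by
      intro m hm
      rw [Finset.mem_range] at hm
      exact mul_nonpos_of_nonneg_of_nonpos (le_of_lt (hc2 m hm)) (hPle (m+1) (by omega))
    have hsum2 : ∑ m ∈ Finset.range N, (W m - W (m+1)) * P (m+1) ≤ 0 :=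
      Finset.sum_nonpos ht2
    have hz1 : W N * P (N+1) = 0 := by linarith
    have hz2 : ∑ m ∈ Finset.range N, (W m - W (m+1)) * P (m+1) = 0 := by linarith
    have hPk : P (N+1) = 0 := by
      rcases mul_eq_zero.mp hz1 with h | h
      · exact absurd h (ne_of_gt hc1)
      · exact h
    have hPm : ∀ m, m < N → P (m+1) = 0 := by
      intro m hm
      have := (Finset.sum_eq_zero_iff_of_nonpos ht2).mp hz2 m (Finset.mem_range.mpr hm)
      rcases mul_eq_zero.mp this with h | h
      · exact absurd h (ne_of_gt (hc2 m hm))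
      · exact h
    intro m hm
    match m with
    | 0 => exact hP0
    | (M+1) =>
        rcases lt_or_eq_of_le hm with h | h
        · exact hPm M (by omega)
        · rw [h, hN]; exact hPk
  have hsval : ∀ m, m ≤ k → ∀ i : Fin n, s m i = if (i:ℕ) < m then 1 else 0 := by
    intro m hm
    have heqm : ∑ i, lam i * s m i
        = ∑ i ∈ Finset.univ.filter (fun i : Fin n => (i:ℕ) < m), lam i := by
      rw [hfil_lam m hm]
      have := hPz m hm
      rw [hP] at this; dsimp only at this
      rw [hR] at this; dsimp only at this
      linarith
    exact (thresh14 lam hlam m (hm.trans hk) (hgt' m hm) (s m) (hs0 m) (hs1 m)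
      (hssum m hm)).2 heqm
  -- extract d j0 i
  have hdj : ∀ i : Fin n, d j0 i = if (i:ℕ) = (j0:ℕ) then 1 else 0 := by
    intro i
    have h1 := hsval ((j0:ℕ)+1) (by omega) i
    have h2 := hsval (j0:ℕ) (le_of_lt j0.isLt) i
    have h3 := hsrec (j0:ℕ) j0.isLt i
    have hj0 : (⟨(j0:ℕ), j0.isLt⟩ : Fin k) = j0 := by simp
    rw [hj0] at h3
    rw [h1, h2] at h3
    by_cases h : (i:ℕ) = (j0:ℕ)
    · rw [if_pos h]
      rw [if_pos (by omega), if_neg (by omega)] at h3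
      linarith
    · rw [if_neg h]
      by_cases h' : (i:ℕ) < (j0:ℕ)
      · rw [if_pos (by omega), if_pos h'] at h3; linarith
      · rw [if_neg (by omega), if_neg h'] at h3; linarith
  have hvalej : ((e j0 : Fin n) : ℕ) = (j0:ℕ) := rfl
  have hczero : ∀ i : Fin n, (i:ℕ) ≠ (j0:ℕ) → c j0 i = 0 := by
    intro i hi
    have := hdj i
    rw [if_neg hi, hd] at this
    exact (pow_eq_zero_iff (by norm_num)).mp this
  have hc1 : c j0 (e j0) * c j0 (e j0) = 1 := by
    have := hdj (e j0)
    rw [if_pos hvalej, hd] at this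
    dsimp only at this
    rw [← this]; ring
  have hpj : p j0 = c j0 (e j0) • u (e j0) := by
    rw [← hexp j0]
    apply Finset.sum_eq_single
    · intro b _ hb
      have : (b:ℕ) ≠ (j0:ℕ) := by
        intro hh
        exact hb (by rw [← hvalej] at hh; exact Fin.ext hh)
      rw [hczero b this, zero_smul]
    · intro h; exact absurd (Finset.mem_univ _) h
  rcases mul_self_eq_one_iff.mp hc1 with h | h
  · left; rw [hpj, h, one_smul]
  · right; rw [hpj, h]
    ext t; simp
end

section
/- Let S ∈ ℝ^{n×m} and define J(P) = Σ_{ℓ=1}^k ‖P_ℓᵀS‖_F². The map J on St(n,k) is invariant under right multiplication of each column by ±1 (i.e., J(PD) = J(P) for any diagonal sign matrix D), but J is NOT in general invariant under an arbitrary orthogonal change of basis Q ∈ O(k): there exist S, P, Q with J(PQ) ≠ J(P). In contrast, the unnested objective ‖PPᵀS‖_F² satisfies ‖(PQ)(PQ)ᵀS‖_F² = ‖PPᵀS‖_F² for all orthogonal Q. -/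
open Matrix BigOperators

theorem stmt16 :
    -- J is invariant under column-wise sign flips
    (∀ (n m k : ℕ) (S : Matrix (Fin n) (Fin m) ℝ) (P : Matrix (Fin n) (Fin k) ℝ)
        (D : Fin k → ℝ), Pᵀ * P = 1 → (∀ j, D j = 1 ∨ D j = -1) →
        J S (P * Matrix.diagonal D) = J S P) ∧
    -- J is NOT invariant under arbitrary orthogonal changes of basis
    (∃ (S : Matrix (Fin 2) (Fin 1) ℝ) (P Q : Matrix (Fin 2) (Fin 2) ℝ),
        Pᵀ * P = 1 ∧ Qᵀ * Q = 1 ∧ Q * Qᵀ = 1 ∧ J S (P * Q) ≠ J S P) ∧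
    -- the unnested objective ‖PPᵀS‖_F² IS invariant under orthogonal Q
    (∀ (n m k : ℕ) (S : Matrix (Fin n) (Fin m) ℝ) (P : Matrix (Fin n) (Fin k) ℝ)
        (Q : Matrix (Fin k) (Fin k) ℝ), Pᵀ * P = 1 → Qᵀ * Q = 1 → Q * Qᵀ = 1 →
        frobSq ((P * Q) * (P * Q)ᵀ * S) = frobSq (P * Pᵀ * S)) := by
  refine ⟨?_, ?_, ?_⟩
  · intro n m k S P D _ hD
    unfold _root_.J
    congr 1; funext ℓ; congr 1; funext j
    have hentry : ∀ c, ((P * Matrix.diagonal D)ᵀ * S) j c = D j * ((Pᵀ * S) j c) := by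
      intro c
      rw [Matrix.transpose_mul, Matrix.diagonal_transpose, Matrix.mul_assoc,
        Matrix.diagonal_mul]
    have hsq : (D j) ^ 2 = 1 := by rcases hD j with h | h <;> simp [h]
    by_cases h : j ≤ ℓ
    · rw [if_pos h, if_pos h]
      refine Finset.sum_congr rfl fun c _ => ?_
      rw [hentry, mul_pow, hsq, one_mul]
    · rw [if_neg h, if_neg h]
  · refine ⟨!![1; 0], 1, !![0,1;1,0], ?_, ?_, ?_, ?_⟩
    · simp
    · ext i j
      fin_cases i <;> fin_cases j <;>
        simp [Matrix.mul_apply, Fin.sum_univ_two, Matrix.one_apply, Matrix.vecHead, Matrix.vecTail]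
    · ext i j
      fin_cases i <;> fin_cases j <;>
        simp [Matrix.mul_apply, Fin.sum_univ_two, Matrix.one_apply, Matrix.vecHead, Matrix.vecTail]
    · rw [Matrix.one_mul]
      unfold _root_.J
      simp only [Fin.sum_univ_two, Fin.sum_univ_one, Fin.le_def, Fin.isValue]
      norm_num [Matrix.mul_apply, Fin.sum_univ_two, Fin.sum_univ_one, Fin.le_def,
        Matrix.vecHead, Matrix.vecTail]
  · intro n m k S P Q hP hQ hQ'
    have h : (P * Q) * (P * Q)ᵀ = P * Pᵀ := by
      rw [Matrix.transpose_mul, Matrix.mul_assoc, ← Matrix.mul_assoc Q, hQ',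
        Matrix.one_mul]
    rw [h]
end
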